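/- arXiv:math/9903079 — 3 statements merged into one kernel-verified Lean document; each statement's English description precedes it below -/
import Mathlib

section
/- Let (Γ₁, Γ₂, τ) be a Belavin–Drinfeld triple and X = {(α,β) : α ≺ β}. There exists a total order < on X such that J = Π^<_{(α,β)∈X} (1 + sign(α,β)(q−q⁻¹) q^{K_{α,β}} e_β ⊗ e_{−α}) and J⁻¹ = Π^>_{(α,β)∈X} (1 − sign(α,β)(q−q⁻¹) q^{K_{α,β}} e_β ⊗ e_{−α}), where Π^< (resp. Π^>) denotes the product taken left to right in increasing (resp. decreasing) order of <, and where the order refines the grading by the power of τ: if τⁱα = β and τʲα' = β' with i < j then (α,β) < (α',β'). -/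
namespace GGS

open Finset
open scoped Classical

noncomputable section

/-- `n × n` complex matrices, `Mat_n(ℂ)`. -/
abbrev MatN (n : ℕ) := Matrix (Fin n) (Fin n) ℂ
/-- `Mat_n(ℂ) ⊗ Mat_n(ℂ)`, realized as matrices indexed by pairs. -/
abbrev MatT (n : ℕ) := Matrix (Fin n × Fin n) (Fin n × Fin n) ℂ
/-- `Mat_n(ℂ)^{⊗3}`. -/
abbrev MatT3 (n : ℕ) := Matrix (Fin n × Fin n × Fin n) (Fin n × Fin n × Fin n) ℂ

/-- Matrix unit `E_{ij}` (ℕ-indices; `0` if out of range). -/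
def E (n i j : ℕ) : MatN n := fun a b => if (a : ℕ) = i ∧ (b : ℕ) = j then 1 else 0

/-- Tensor (Kronecker) product of two `n × n` matrices. -/
def tens {n : ℕ} (A B : MatN n) : MatT n := fun p q => A p.1 q.1 * B p.2 q.2

/-- `M₂₁` : swap of the two tensor factors. -/
def swap21 {n : ℕ} (M : MatT n) : MatT n := fun p q => M (p.2, p.1) (q.2, q.1)

/-- The permutation (Casimir) element `P = Σ E_{ij} ⊗ E_{ji}`. -/
def Pm (n : ℕ) : MatT n := ∑ i ∈ range n, ∑ j ∈ range n, tens (E n i j) (E n j i)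

/-- `P⁰ = Σ E_{ii} ⊗ E_{ii}`. -/
def P0 (n : ℕ) : MatT n := ∑ i ∈ range n, tens (E n i i) (E n i i)

/-- `M₁₂ = M ⊗ 1`. -/
def lift12 {n : ℕ} (M : MatT n) : MatT3 n :=
  fun p q => M (p.1, p.2.1) (q.1, q.2.1) * (if p.2.2 = q.2.2 then 1 else 0)

/-- `M₁₃`. -/
def lift13 {n : ℕ} (M : MatT n) : MatT3 n :=
  fun p q => M (p.1, p.2.2) (q.1, q.2.2) * (if p.2.1 = q.2.1 then 1 else 0)

/-- `M₂₃ = 1 ⊗ M`. -/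
def lift23 {n : ℕ} (M : MatT n) : MatT3 n :=
  fun p q => M (p.2.1, p.2.2) (q.2.1, q.2.2) * (if p.1 = q.1 then 1 else 0)

/-- The quantum Yang–Baxter equation `R₁₂R₁₃R₂₃ = R₂₃R₁₃R₁₂`. -/
def QYBE {n : ℕ} (M : MatT n) : Prop :=
  lift12 M * lift13 M * lift23 M = lift23 M * lift13 M * lift12 M

/-- The Hecke relation `(PR − q)(PR + q⁻¹) = 0`. -/
def Hecke {n : ℕ} (q : ℝ) (M : MatT n) : Prop :=
  (Pm n * M - (q : ℂ) • (1 : MatT n)) * (Pm n * M + (q : ℂ)⁻¹ • (1 : MatT n)) = 0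

/-- Standard basis vector `e_i` of `ℂⁿ` (as a function on indices). -/
def evec (i : ℕ) : ℕ → ℂ := fun k => if k = i then 1 else 0
/-- The root vector `e_i − e_j`. -/
def rvec (i j : ℕ) : ℕ → ℂ := evec i - evec j
/-- The simple root `α_i = e_i − e_{i+1}` (0-based indexing). -/
def svec (i : ℕ) : ℕ → ℂ := rvec i (i + 1)
/-- The inner product on `ℂⁿ` for which `(e_i)` is orthonormal (restricted to real vectors). -/
def ipn (n : ℕ) (x y : ℕ → ℂ) : ℂ := ∑ k ∈ range n, x k * y k

/-- A Belavin–Drinfeld triple of type `A_{n−1}`; simple roots are indexed `0,…,n−2`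
(0-based: index `i` stands for `α_i = e_i − e_{i+1}`). -/
structure BDTriple (n : ℕ) where
  Γ1 : Finset ℕ
  Γ2 : Finset ℕ
  τ : ℕ → ℕ
  mem1 : ∀ i ∈ Γ1, i + 1 < n
  mem2 : ∀ i ∈ Γ2, i + 1 < n
  bij : Set.BijOn τ ↑Γ1 ↑Γ2
  isometry : ∀ i ∈ Γ1, ∀ j ∈ Γ1, ipn n (svec (τ i)) (svec (τ j)) = ipn n (svec i) (svec j)
  nilp : ∀ i ∈ Γ1, ∃ k ≥ 1, τ^[k] i ∉ Γ1

variable {n : ℕ}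

/-- The positive root `e_i − e_j` (`i < j`) lies in `Γ̃₁` (the positive part of `Span Γ₁`). -/
def SpanRoot (T : BDTriple n) (i j : ℕ) : Prop :=
  i < j ∧ ∀ k, i ≤ k → k < j → k ∈ T.Γ1

/-- `q = τ(p)` for positive roots, via the additive extension of `τ` to `Γ̃₁`. -/
def tauStep (T : BDTriple n) (p q : ℕ × ℕ) : Prop :=
  SpanRoot T p.1 p.2 ∧ q.1 < q.2 ∧ rvec q.1 q.2 = ∑ k ∈ Finset.Ico p.1 p.2, svec (T.τ k)

/-- `q = τᵏ(p)`. -/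
def precK (T : BDTriple n) : ℕ → ℕ × ℕ → ℕ × ℕ → Prop
  | 0, p, q => p = q
  | k + 1, p, q => ∃ r, tauStep T p r ∧ precK T k r q

/-- `p ≺ q`, i.e. `q = τᵏ p` for some `k ≥ 1`. -/
def prec (T : BDTriple n) (p q : ℕ × ℕ) : Prop := ∃ k, precK T (k + 1) p q

/-- `p ≺← q` : `q = τᵏ p` and `τᵏ` reverses orientation on `p`. -/
def RevOri (T : BDTriple n) (p q : ℕ × ℕ) : Prop :=
  ∃ k, precK T (k + 1) p q ∧ T.τ^[k + 1] p.1 = q.2 - 1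

/-- `p ≺→ q` : `q = τᵏ p` and `τᵏ` preserves orientation on `p`. -/
def PresOri (T : BDTriple n) (p q : ℕ × ℕ) : Prop :=
  ∃ k, precK T (k + 1) p q ∧ T.τ^[k + 1] p.1 = q.1

/-- `sign(α,β)` : `(−1)^{1−|α|}` in the orientation-reversing case, `1` otherwise. -/
def sgn (T : BDTriple n) (p q : ℕ × ℕ) : ℂ :=
  if RevOri T p q then (-1 : ℂ) ^ (p.2 - p.1 - 1) else 1

/-- Sum over all pairs of (would-be) positive roots with indices `< n`. -/
def sumRoots (n : ℕ) (f : ℕ × ℕ → ℕ × ℕ → MatT n) : MatT n :=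
  ∑ i ∈ range n, ∑ j ∈ range n, ∑ k ∈ range n, ∑ l ∈ range n, f (i, j) (k, l)

/-- `a = Σ_{α≺β} sign(α,β) (e_{−α} ⊗ e_β − e_β ⊗ e_{−α})`. -/
def aMat (T : BDTriple n) : MatT n :=
  sumRoots n fun p q =>
    if prec T p q then
      sgn T p q • (tens (E n p.2 p.1) (E n q.1 q.2) - tens (E n q.1 q.2) (E n p.2 p.1))
    else 0

/-- `r_s = ½ P⁰ + Σ_{α>0} e_{−α} ⊗ e_α`. -/
def rsMat (n : ℕ) : MatT n :=
  (1 / 2 : ℂ) • P0 n +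
    ∑ i ∈ range n, ∑ j ∈ range n, if i < j then tens (E n j i) (E n i j) else 0

/-- `ε = a r_s + r_s a + a²`. -/
def epsMat (T : BDTriple n) : MatT n :=
  aMat T * rsMat n + rsMat n * aMat T + aMat T * aMat T

/-- Entry of a tensor-square matrix, with ℕ indices. -/
def entry (M : MatT n) (a b c d : ℕ) : ℂ :=
  if h : a < n ∧ b < n ∧ c < n ∧ d < n then
    M (⟨a, h.1⟩, ⟨b, h.2.1⟩) (⟨c, h.2.2.1⟩, ⟨d, h.2.2.2⟩)
  else 0

/-- The coefficient of `e_β ⊗ e_{−α}` in `M` (here `p = α`, `q = β`). -/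
def coeffBA (M : MatT n) (p q : ℕ × ℕ) : ℂ := entry M q.1 p.2 q.2 p.1

/-- `q^z = exp(z · ln q)`. -/
def qpow (q : ℝ) (z : ℂ) : ℂ := Complex.exp (z * (Real.log q : ℂ))

/-- The coefficients `K_{α,β}`. -/
def Kc (T : BDTriple n) (p q : ℕ × ℕ) : ℂ :=
  (if p.2 = q.1 then (1 / 2 : ℂ) else 0) - (if q.2 = p.1 then (1 / 2 : ℂ) else 0)
    + (if ∃ g : ℕ × ℕ, prec T p g ∧ prec T g q ∧ p.2 = g.1 then 1 else 0)
    - (if ∃ g : ℕ × ℕ, prec T p g ∧ prec T g q ∧ g.2 = p.1 then 1 else 0)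
    + (if RevOri T p q then 1 - ((p.2 - p.1 : ℕ) : ℂ) else 0)

/-- `Jⁱ = 1 + (q − q⁻¹) Σ_{β = τⁱα} sign(α,β) q^{K_{α,β}} e_β ⊗ e_{−α}`. -/
def Jlevel (q : ℝ) (T : BDTriple n) (i : ℕ) : MatT n :=
  1 + sumRoots n fun p r =>
    if precK T i p r then
      (((q : ℂ) - (q : ℂ)⁻¹) * sgn T p r * qpow q (Kc T p r)) • tens (E n r.1 r.2) (E n p.2 p.1)
    else 0

/-- `J = J¹ J² ⋯` (levels beyond the maximal power of `τ` contribute the identity). -/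
def Jmat (q : ℝ) (T : BDTriple n) : MatT n :=
  ((List.range n).map fun i => Jlevel q T (i + 1)).prod

/-- The standard Drinfeld–Jimbo `R`-matrix `R_s`. -/
def RsQ (n : ℕ) (q : ℝ) : MatT n :=
  (q : ℂ) • P0 n
    + (∑ i ∈ range n, ∑ j ∈ range n, if i ≠ j then tens (E n i i) (E n j j) else 0)
    + ((q : ℂ) - (q : ℂ)⁻¹) •
        (∑ i ∈ range n, ∑ j ∈ range n, if j < i then tens (E n i j) (E n j i) else 0)

/-- `e_{−α} ∧_c e_β = q^{−c} e_{−α} ⊗ e_β − q^c e_β ⊗ e_{−α}` (`p = α`, `r = β`). -/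
def wedgeC {n : ℕ} (q : ℝ) (c : ℂ) (p r : ℕ × ℕ) : MatT n :=
  qpow q (-c) • tens (E n p.2 p.1) (E n r.1 r.2) - qpow q c • tens (E n r.1 r.2) (E n p.2 p.1)

/-- `R̄_GGS = R_s + (q−q⁻¹) Σ_{α≺β} sign(α,β) e_{−α} ∧_{−sign(α,β) ε_{α,β}} e_β`. -/
def RbarGGS (q : ℝ) (T : BDTriple n) : MatT n :=
  RsQ n q + ((q : ℂ) - (q : ℂ)⁻¹) •
    sumRoots n fun p r =>
      if prec T p r then
        sgn T p r • wedgeC q (-(sgn T p r) * coeffBA (epsMat T) p r) p r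
      else 0

/-- `R̄_J = J⁻¹ R_s J₂₁`. -/
def RbarJ (q : ℝ) (T : BDTriple n) : MatT n :=
  (Jmat q T)⁻¹ * RsQ n q * swap21 (Jmat q T)

/-- `q^{r⁰}` for a diagonal⊗diagonal `r⁰`. -/
def qr0 (n : ℕ) (q : ℝ) (r0 : ℕ → ℕ → ℂ) : MatT n :=
  ∑ i ∈ range n, ∑ j ∈ range n, qpow q (r0 i j) • tens (E n i i) (E n j j)

/-- `R_GGS = q^{r⁰} R̄_GGS q^{r⁰}`. -/
def RGGS (q : ℝ) (T : BDTriple n) (r0 : ℕ → ℕ → ℂ) : MatT n :=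
  qr0 n q r0 * RbarGGS q T * qr0 n q r0

/-- `R_J = q^{r⁰} R̄_J q^{r⁰}`. -/
def RJ (q : ℝ) (T : BDTriple n) (r0 : ℕ → ℕ → ℂ) : MatT n :=
  qr0 n q r0 * RbarJ q T * qr0 n q r0

/-- `r⁰ ∈ 𝔥 ∧ 𝔥`, i.e. the coefficient matrix is antisymmetric. -/
def Antisym (n : ℕ) (r0 : ℕ → ℕ → ℂ) : Prop := ∀ i < n, ∀ j < n, r0 i j = -r0 j i

/-- The Belavin–Drinfeld compatibility equations
`((α − τα) ⊗ 1) r⁰ = ½ ((α + τα) ⊗ 1) P⁰` for all `α ∈ Γ₁`, written componentwise. -/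
def Compat (T : BDTriple n) (r0 : ℕ → ℕ → ℂ) : Prop :=
  ∀ s ∈ T.Γ1, ∀ j < n,
    r0 s j - r0 (s + 1) j - r0 (T.τ s) j + r0 (T.τ s + 1) j
      = (1 / 2 : ℂ) *
        ((if j = s then 1 else 0) - (if j = s + 1 then 1 else 0)
          + (if j = T.τ s then 1 else 0) - (if j = T.τ s + 1 then 1 else 0))

/-- `a₊ⁱ` : the part of `a₊` supported on pairs with `β = τⁱα`. -/
def aPlusLev (T : BDTriple n) (i : ℕ) : MatT n :=
  sumRoots n fun p r =>
    if precK T i p r then (-(sgn T p r)) • tens (E n r.1 r.2) (E n p.2 p.1) else 0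

/-- `a₊ = Σ_{α≺β} (−sign(α,β)) e_β ⊗ e_{−α}`. -/
def aPlus (T : BDTriple n) : MatT n :=
  sumRoots n fun p r =>
    if prec T p r then (-(sgn T p r)) • tens (E n r.1 r.2) (E n p.2 p.1) else 0

/-- `a₋ = Σ_{α≺β} sign(α,β) e_{−α} ⊗ e_β`. -/
def aMinus (T : BDTriple n) : MatT n :=
  sumRoots n fun p r =>
    if prec T p r then sgn T p r • tens (E n p.2 p.1) (E n r.1 r.2) else 0

/-- `P₊ = Σ_{i<j} E_{ij}⊗E_{ji} + ½P⁰`. -/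
def PPlus (n : ℕ) : MatT n :=
  (∑ i ∈ range n, ∑ j ∈ range n, if i < j then tens (E n i j) (E n j i) else 0)
    + (1 / 2 : ℂ) • P0 n

/-- `P₋ = Σ_{i>j} E_{ij}⊗E_{ji} + ½P⁰`. -/
def PMinus (n : ℕ) : MatT n :=
  (∑ i ∈ range n, ∑ j ∈ range n, if j < i then tens (E n i j) (E n j i) else 0)
    + (1 / 2 : ℂ) • P0 n

/-- The matrix `Σ_{i≥j} a₊ⁱa₊ʲ − Σ_{i<j} a₊ⁱa₊ʲ + a₊P₋ + a₋P₊ + P₊a₊ + a₊a₋ − a₋a₊`. -/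
def Mmat (T : BDTriple n) : MatT n :=
  (∑ i ∈ range n, ∑ j ∈ range n, if j ≤ i then aPlusLev T (i + 1) * aPlusLev T (j + 1) else 0)
    - (∑ i ∈ range n, ∑ j ∈ range n, if i < j then aPlusLev T (i + 1) * aPlusLev T (j + 1) else 0)
    + aPlus T * PMinus n + aMinus T * PPlus n + PPlus n * aPlus T
    + aPlus T * aMinus T - aMinus T * aPlus T

/-- `L_{α,β}` : `½` if `α ⋖ β`, `−½` if `α ⋗ β`, `0` otherwise. -/
def Lc (p r : ℕ × ℕ) : ℂ :=
  if p.2 = r.1 then 1 / 2 else if r.2 = p.1 then -(1 / 2) else 0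

/-- The part of `M` (viewed on the basis `e_{τα} ⊗ e_{−α}`, `α ∈ Γ̃₁`) supported on
pairs with `α ⋗ τα`. -/
def partGtr (T : BDTriple n) (M : MatT n) : MatT n :=
  sumRoots n fun p r =>
    if tauStep T p r ∧ r.2 = p.1 then coeffBA M p r • tens (E n r.1 r.2) (E n p.2 p.1) else 0

/-- The part of `M` (viewed on the basis `e_{−α} ⊗ e_{τα}`, `α ∈ Γ̃₁`) supported on
pairs with `α ⋖ τα`. -/
def partLess21 (T : BDTriple n) (M : MatT n) : MatT n :=
  sumRoots n fun p r =>
    if tauStep T p r ∧ p.2 = r.1 then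
      entry M p.2 r.1 p.1 r.2 • tens (E n p.2 p.1) (E n r.1 r.2)
    else 0



lemma tens_mul {n : ℕ} (A B C D : MatN n) : tens A B * tens C D = tens (A*C) (B*D) := by
  ext p r
  simp only [Matrix.mul_apply, tens, Fintype.sum_prod_type, Finset.sum_mul_sum]
  apply Finset.sum_congr rfl; intro x _
  apply Finset.sum_congr rfl; intro y _
  ring

lemma E_mul_E_zero {n : ℕ} {b c : ℕ} (h : b ≠ c) (a d : ℕ) : E n a b * E n c d = 0 := by
  ext x y
  rw [Matrix.mul_apply]
  apply Finset.sum_eq_zero; intro z _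
  simp only [E]
  split_ifs with h1 h2 <;> simp_all

lemma tens_zero_left {n : ℕ} (B : MatN n) : tens (0 : MatN n) B = 0 := by
  ext p r; simp [tens]

def Xm (n : ℕ) (pq : (ℕ×ℕ)×(ℕ×ℕ)) : MatT n := tens (E n pq.2.1 pq.2.2) (E n pq.1.2 pq.1.1)

lemma X_mul_X_zero {n : ℕ} (pq pq' : (ℕ×ℕ)×(ℕ×ℕ)) (h : pq.2.2 ≠ pq'.2.1) :
    Xm n pq * Xm n pq' = 0 := by
  rw [Xm, Xm, tens_mul, E_mul_E_zero h, tens_zero_left]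

/-- product of (1 + a) over pairwise-annihilating list -/
lemma prod_one_add {n : ℕ} (l : List (MatT n)) (h : l.Pairwise (fun a b => a * b = 0)) :
    (l.map (fun a => 1 + a)).prod = 1 + l.sum := by
  induction l with
  | nil => simp
  | cons a t ih =>
    rw [List.pairwise_cons] at h
    have hz : a * t.sum = 0 := by
      clear ih
      induction t with
      | nil => simp
      | cons b t2 ih2 =>
        rw [List.sum_cons, mul_add, h.1 b (by simp)]
        rw [ih2 ⟨fun x hx => h.1 x (by simp [hx]), (List.pairwise_cons.mp h.2).2⟩]
        simp
    rw [List.map_cons, List.prod_cons, ih h.2, List.sum_cons]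
    rw [mul_add, add_mul, add_mul, one_mul, mul_one, hz, one_mul]
    abel

lemma prod_mul_reverse {n : ℕ} {β : Type} (l : List β) (f g : β → MatT n)
    (h : ∀ x ∈ l, f x * g x = 1) :
    (l.map f).prod * (l.reverse.map g).prod = 1 := by
  induction l with
  | nil => simp
  | cons a t ih =>
    rw [List.map_cons, List.prod_cons, List.reverse_cons, List.map_append, List.prod_append]
    have := ih (fun x hx => h x (by simp [hx]))
    calc f a * (t.map f).prod * ((t.reverse.map g).prod * ([a].map g).prod)
        = f a * ((t.map f).prod * (t.reverse.map g).prod) * g a := by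
          simp [mul_assoc]
      _ = 1 := by rw [this, mul_one, h a (by simp)]

lemma prod_map_flatMap {α β M : Type} [Monoid M] (l : List α) (f : α → List β) (g : β → M) :
    ((l.flatMap f).map g).prod = (l.map fun a => ((f a).map g).prod).prod := by
  induction l with
  | nil => simp
  | cons a t ih => simp [List.flatMap_cons, ih]

lemma sum_map_flatMap {α β M : Type} [AddCommMonoid M] (l : List α) (f : α → List β) (g : β → M) :
    ((l.flatMap f).map g).sum = (l.map fun a => ((f a).map g).sum).sum := by
  induction l with
  | nil => simp
  | cons a t ih => simp [List.flatMap_cons, ih]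

lemma pairwise_flatMap {α β : Type} {l : List α} {f : α → List β} {R : β → β → Prop}
    (h₁ : ∀ a ∈ l, (f a).Pairwise R)
    (h₂ : l.Pairwise (fun a b => ∀ x ∈ f a, ∀ y ∈ f b, R x y)) :
    (l.flatMap f).Pairwise R := by
  induction l with
  | nil => simp
  | cons a t ih =>
    rw [List.pairwise_cons] at h₂
    rw [List.flatMap_cons, List.pairwise_append]
    refine ⟨h₁ a (by simp), ih (fun x hx => h₁ x (by simp [hx])) h₂.2, ?_⟩
    intro x hx y hy
    rw [List.mem_flatMap] at hy
    obtain ⟨b, hb, hyb⟩ := hy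
    exact h₂.1 b hb x hx y hyb

lemma sum_map_range {M : Type} [AddCommMonoid M] (m : ℕ) (f : ℕ → M) :
    ((List.range m).map f).sum = ∑ i ∈ range m, f i := by
  induction m with
  | zero => simp
  | succ k ih => rw [List.range_succ, Finset.sum_range_succ, List.map_append, List.sum_append, ih]; simp

lemma sum_map_filter {α M : Type} [AddCommMonoid M] (l : List α) (P : α → Prop)
    [DecidablePred P] (g : α → M) :
    (l.map fun x => if P x then g x else 0).sum = ((l.filter P).map g).sum := by
  induction l with
  | nil => simp
  | cons a t ih =>
    by_cases h : P a <;> simp [List.filter_cons, h, ih]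


lemma rvec_inj {i j i' j' : ℕ} (hij : i < j) (hij' : i' < j') (h : rvec i j = rvec i' j') :
    i = i' ∧ j = j' := by
  have hi := congrFun h i
  have hj := congrFun h j
  simp only [rvec, evec, Pi.sub_apply] at hi hj
  constructor
  · by_contra hne
    split_ifs at hi <;> norm_num at hi <;> omega
  · by_contra hne
    split_ifs at hj <;> norm_num at hj <;> omega

/-- multiplicity of `t` as value of `τ` on the interval is the indicator of `[r1,r2)`. -/
lemma tauStep_card {T : BDTriple n} {p r : ℕ × ℕ} (h : tauStep T p r) (t : ℕ) :
    ((Finset.Ico p.1 p.2).filter (fun k => t = T.τ k)).card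
      = if r.1 ≤ t ∧ t < r.2 then 1 else 0 := by
  obtain ⟨h1, h2, h3⟩ := h
  set c : ℕ → ℕ := fun t => ((Finset.Ico p.1 p.2).filter (fun k => t = T.τ k)).card with hc
  have key : ∀ t : ℕ, ((if t = r.1 then (1:ℂ) else 0) - (if t = r.2 then 1 else 0))
      = (c t : ℂ) - (((Finset.Ico p.1 p.2).filter (fun k => t = T.τ k + 1)).card : ℂ) := by
    intro t
    have ht := congrFun h3 t
    simp only [rvec, svec, evec, Pi.sub_apply, Finset.sum_apply, Finset.sum_sub_distrib,
      Finset.sum_boole] at ht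
    exact ht
  have keyzero : (c 0 : ℂ) = (if 0 = r.1 then 1 else 0) := by
    have := key 0
    have hz : ((Finset.Ico p.1 p.2).filter (fun k => 0 = T.τ k + 1)).card = 0 := by
      rw [Finset.card_eq_zero]
      apply Finset.filter_false_of_mem
      intro k _
      omega
    rw [hz] at this
    have hr2 : ¬ (0 = r.2) := by omega
    rw [if_neg hr2] at this
    push_cast at this
    linear_combination -this
  have keysucc : ∀ t : ℕ, (c (t+1) : ℂ)
      = (c t : ℂ) + (if t+1 = r.1 then 1 else 0) - (if t+1 = r.2 then 1 else 0) := by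
    intro t
    have := key (t+1)
    have hshift : ((Finset.Ico p.1 p.2).filter (fun k => t+1 = T.τ k + 1)).card = c t := by
      congr 1
      apply Finset.filter_congr
      intro k _
      first | omega | (simp only [eq_iff_iff]; omega)
    rw [hshift] at this
    linear_combination -this
  -- now induction
  induction t with
  | zero =>
    have h0 : (c 0 : ℂ) = ((if r.1 ≤ 0 ∧ 0 < r.2 then 1 else 0 : ℕ) : ℂ) := by
      rw [keyzero]
      split_ifs <;> norm_num <;> omega
    exact_mod_cast h0
  | succ t ih =>
    have hs : (c (t+1) : ℂ) = ((if r.1 ≤ t+1 ∧ t+1 < r.2 then 1 else 0 : ℕ) : ℂ) := by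
      rw [keysucc t]
      have ih' : (c t : ℕ) = if r.1 ≤ t ∧ t < r.2 then 1 else 0 := ih
      rw [ih']
      split_ifs <;> push_cast <;> (first | (exfalso; omega) | norm_num)
    exact_mod_cast hs

lemma tauStep_maps {T : BDTriple n} {p r : ℕ × ℕ} (h : tauStep T p r) :
    ∀ k ∈ Finset.Ico p.1 p.2, r.1 ≤ T.τ k ∧ T.τ k < r.2 := by
  intro k hk
  have hcard := tauStep_card h (T.τ k)
  by_contra hcon
  rw [if_neg hcon, Finset.card_eq_zero] at hcard
  have : k ∈ ((Finset.Ico p.1 p.2).filter (fun k' => T.τ k = T.τ k')) := by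
    simp [hk]
  rw [hcard] at this
  simp at this

lemma tauStep_image {T : BDTriple n} {p r : ℕ × ℕ} (h : tauStep T p r) :
    (Finset.Ico p.1 p.2).image T.τ = Finset.Ico r.1 r.2 := by
  ext t
  rw [Finset.mem_image, Finset.mem_Ico]
  constructor
  · rintro ⟨k, hk, rfl⟩
    exact tauStep_maps h k hk
  · intro ht
    have hcard := tauStep_card h t
    rw [if_pos ht] at hcard
    have hne : ((Finset.Ico p.1 p.2).filter (fun k => t = T.τ k)).Nonempty := by
      rw [← Finset.card_pos, hcard]; norm_num
    obtain ⟨k, hk⟩ := hne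
    rw [Finset.mem_filter] at hk
    exact ⟨k, hk.1, hk.2.symm⟩

lemma tauStep_sub_Γ1 {T : BDTriple n} {p r : ℕ × ℕ} (h : tauStep T p r) :
    ∀ k ∈ Finset.Ico p.1 p.2, k ∈ T.Γ1 := by
  intro k hk
  rw [Finset.mem_Ico] at hk
  exact h.1.2 k hk.1 hk.2

lemma tauStep_len {T : BDTriple n} {p r : ℕ × ℕ} (h : tauStep T p r) :
    p.2 - p.1 = r.2 - r.1 := by
  have himg := tauStep_image h
  have hinj : Set.InjOn T.τ ↑(Finset.Ico p.1 p.2) := by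
    apply T.bij.injOn.mono
    intro k hk
    exact tauStep_sub_Γ1 h k hk
  have := Finset.card_image_of_injOn hinj
  rw [himg, Nat.card_Ico, Nat.card_Ico] at this
  omega

lemma tauStep_p2_lt {T : BDTriple n} {p r : ℕ × ℕ} (h : tauStep T p r) : p.2 < n := by
  have h1 := h.1.1
  have := T.mem1 (p.2 - 1) (h.1.2 (p.2 - 1) (by omega) (by omega))
  omega

lemma tauStep_r2_lt {T : BDTriple n} {p r : ℕ × ℕ} (h : tauStep T p r) : r.2 < n := by
  have h2 := h.2.1
  have : r.2 - 1 ∈ (Finset.Ico p.1 p.2).image T.τ := by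
    rw [tauStep_image h, Finset.mem_Ico]; omega
  rw [Finset.mem_image] at this
  obtain ⟨k, hk, hτ⟩ := this
  have hkΓ : k ∈ T.Γ1 := tauStep_sub_Γ1 h k hk
  have : T.τ k ∈ T.Γ2 := T.bij.mapsTo hkΓ
  have := T.mem2 _ this
  omega

lemma tauStep_fun {T : BDTriple n} {p r r' : ℕ × ℕ} (h : tauStep T p r) (h' : tauStep T p r') :
    r = r' := by
  have : rvec r.1 r.2 = rvec r'.1 r'.2 := by rw [h.2.2, h'.2.2]
  have := rvec_inj h.2.1 h'.2.1 this
  exact Prod.ext this.1 this.2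

lemma precK_fun {T : BDTriple n} : ∀ {k : ℕ} {p q q' : ℕ × ℕ},
    precK T k p q → precK T k p q' → q = q' := by
  intro k
  induction k with
  | zero => intro p q q' h h'; exact h.symm.trans h'
  | succ m ih =>
    rintro p q q' ⟨r, hr, hrq⟩ ⟨r', hr', hrq'⟩
    have := tauStep_fun hr hr'
    subst this
    exact ih hrq hrq'

lemma precK_add {T : BDTriple n} : ∀ (a b : ℕ) (p q : ℕ × ℕ),
    precK T (a + b) p q ↔ ∃ y, precK T a p y ∧ precK T b y q := by
  intro a
  induction a with
  | zero =>
    intro b p q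
    simp only [Nat.zero_add]
    constructor
    · intro h; exact ⟨p, rfl, h⟩
    · rintro ⟨y, hy, h⟩
      have : p = y := hy
      subst this; exact h
  | succ m ih =>
    intro b p q
    have hrw : m + 1 + b = (m + b) + 1 := by omega
    rw [hrw]
    constructor
    · rintro ⟨r, hr, hrq⟩
      obtain ⟨y, h1, h2⟩ := (ih b r q).mp hrq
      exact ⟨y, ⟨r, hr, h1⟩, h2⟩
    · rintro ⟨y, ⟨r, hr, hry⟩, hyq⟩
      exact ⟨r, hr, (ih b r q).mpr ⟨y, hry, hyq⟩⟩

lemma precK_last {T : BDTriple n} {k : ℕ} {p q : ℕ × ℕ} :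
    precK T (k + 1) p q ↔ ∃ y, precK T k p y ∧ tauStep T y q := by
  rw [precK_add k 1 p q]
  constructor
  · rintro ⟨y, hy, r, hr, hrq⟩
    have : r = q := hrq
    subst this
    exact ⟨y, hy, hr⟩
  · rintro ⟨y, hy, hs⟩
    exact ⟨y, hy, q, hs, rfl⟩

lemma precK_snd_lt {T : BDTriple n} {k : ℕ} {p q : ℕ × ℕ} (h : precK T (k + 1) p q) :
    q.1 < q.2 := by
  obtain ⟨y, _, hs⟩ := precK_last.mp h
  exact hs.2.1

lemma precK_bounds {T : BDTriple n} {k : ℕ} {p q : ℕ × ℕ} (h : precK T (k + 1) p q) :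
    p.1 < p.2 ∧ p.2 < n ∧ q.1 < q.2 ∧ q.2 < n := by
  have h2 := h
  obtain ⟨r, hr, _⟩ := h2
  obtain ⟨y, _, hs⟩ := precK_last.mp h
  exact ⟨hr.1.1, tauStep_p2_lt hr, hs.2.1, tauStep_r2_lt hs⟩

/-- no cycles -/
lemma no_cycle {T : BDTriple n} {m : ℕ} {p : ℕ × ℕ} (h : precK T (m + 1) p p) : False := by
  have hmul : ∀ t : ℕ, precK T ((m + 1) * t) p p := by
    intro t
    induction t with
    | zero => rfl
    | succ s ih =>
      have : (m + 1) * (s + 1) = (m + 1) * s + (m + 1) := by ring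
      rw [this, precK_add]
      exact ⟨p, ih, h⟩
  have hiter : ∀ j : ℕ, ∃ x, precK T j p x := by
    intro j
    have hj : (m + 1) * j = j + ((m + 1) * j - j) := by
      have : j ≤ (m + 1) * j := Nat.le_mul_of_pos_left j (by omega)
      omega
    have := hmul j
    rw [hj, precK_add] at this
    obtain ⟨y, hy, _⟩ := this
    exact ⟨y, hy⟩
  set x : ℕ → ℕ × ℕ := fun j => (hiter j).choose with hxdef
  have hx : ∀ j, precK T j p (x j) := fun j => (hiter j).choose_spec
  have hstep : ∀ j, tauStep T (x j) (x (j + 1)) := by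
    intro j
    obtain ⟨y, hy, hs⟩ := precK_last.mp (hx (j + 1))
    rwa [precK_fun hy (hx j)] at hs
  have hin : ∀ j, (x j).1 ≤ T.τ^[j] p.1 ∧ T.τ^[j] p.1 < (x j).2 := by
    intro j
    induction j with
    | zero =>
      have h0 : p = x 0 := hx 0
      simp only [Function.iterate_zero, id_eq]
      refine ⟨by rw [← h0], ?_⟩
      have := (hstep 0).1.1
      rw [← h0] at this
      exact this.trans_le (by rw [h0])
    | succ j ih =>
      rw [Function.iterate_succ_apply']
      have := tauStep_maps (hstep j) (T.τ^[j] p.1) (by rw [Finset.mem_Ico]; exact ih)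
      exact this
  have hΓ : ∀ j, T.τ^[j] p.1 ∈ T.Γ1 := by
    intro j
    exact (hstep j).1.2 _ (hin j).1 (hin j).2
  obtain ⟨k, hk1, hk2⟩ := T.nilp p.1 (by simpa using hΓ 0)
  exact hk2 (hΓ k)

lemma level_lt_absurd {T : BDTriple n} {a b : ℕ} {p q : ℕ × ℕ} (hab : a < b)
    (ha : precK T (a + 1) p q) (hb : precK T (b + 1) p q) : False := by
  have hsplit : b + 1 = (a + 1) + (b - a) := by omega
  rw [hsplit, precK_add] at hb
  obtain ⟨y, hy, hyq⟩ := hb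
  rw [precK_fun hy ha] at hyq
  have : b - a = (b - a - 1) + 1 := by omega
  rw [this] at hyq
  exact no_cycle hyq

lemma level_unique {T : BDTriple n} {a b : ℕ} {p q : ℕ × ℕ}
    (ha : precK T (a + 1) p q) (hb : precK T (b + 1) p q) : a = b := by
  by_contra hne
  rcases Nat.lt_or_ge a b with h | h
  · exact level_lt_absurd h ha hb
  · exact level_lt_absurd (by omega) hb ha

/-- level bound -/
lemma level_bound {T : BDTriple n} {m : ℕ} {p q : ℕ × ℕ} (h : precK T (m + 1) p q) :
    m + 1 < n := by
  have hiter : ∀ j ≤ m + 1, ∃ x, precK T j p x := by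
    intro j hj
    have hj2 : m + 1 = j + (m + 1 - j) := by omega
    have h2 := h
    rw [hj2, precK_add] at h2
    obtain ⟨y, hy, _⟩ := h2
    exact ⟨y, hy⟩
  set x : ℕ → ℕ × ℕ := fun j => if hj : ∃ x, precK T j p x then hj.choose else p with hxdef
  have hx : ∀ j ≤ m + 1, precK T j p (x j) := by
    intro j hj
    have hex := hiter j hj
    simp only [hxdef, dif_pos hex]
    exact hex.choose_spec
  have hstep : ∀ j < m + 1, tauStep T (x j) (x (j + 1)) := by
    intro j hj
    obtain ⟨y, hy, hs⟩ := precK_last.mp (hx (j + 1) (by omega))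
    rwa [precK_fun hy (hx j (by omega))] at hs
  have hℓ : ∀ j, j ≤ m + 1 → ((x j).2 - (x j).1 = p.2 - p.1 ∧ (x j).1 < (x j).2) := by
    intro j
    induction j with
    | zero =>
      intro _
      have h0 : p = x 0 := hx 0 (by omega)
      exact ⟨by rw [← h0], by rw [← h0]; exact (by rw [h0]; exact (hstep 0 (by omega)).1.1)⟩
    | succ j ih =>
      intro hj
      have ihj := ih (by omega)
      have hlen := tauStep_len (hstep j (by omega))
      have hlt := (hstep j (by omega)).2.1
      omega
  have hp12 : p.1 < p.2 := by
    have h0 : p = x 0 := hx 0 (by omega)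
    have := (hℓ 0 (by omega)).2
    rw [← h0] at this
    exact this
  have hsecond : ∀ j < m + 1, (x j).2 < n := fun j hj => tauStep_p2_lt (hstep j hj)
  have hinj : ∀ i ≤ m + 1, ∀ j ≤ m + 1, i < j → x i ≠ x j := by
    intro i hi j hj hij heq
    have hxj := hx j hj
    have hsplit : j = i + (j - i) := by omega
    rw [hsplit, precK_add] at hxj
    obtain ⟨y, hy, hyx⟩ := hxj
    rw [precK_fun hy (hx i hi)] at hyx
    have hij2 : i + (j - i) = j := by omega
    rw [hij2, ← heq] at hyx
    have hji : j - i = (j - i - 1) + 1 := by omega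
    rw [hji] at hyx
    exact no_cycle hyx
  have hcard : (Finset.range (m + 1)).card ≤ (Finset.range (n - (p.2 - p.1))).card := by
    apply Finset.card_le_card_of_injOn (fun j => (x j).1)
    · intro j hj
      simp only [Finset.coe_range, Set.mem_Iio] at hj ⊢
      show (x j).1 < n - (p.2 - p.1)
      have h1 := hsecond j hj
      have h2 := hℓ j (by omega)
      omega
    · intro i hi j hj hfij
      simp only [Finset.coe_range, Set.mem_Iio] at hi hj
      have hfij' : (x i).1 = (x j).1 := hfij
      by_contra hne
      have hli := hℓ i (by omega)
      have hlj := hℓ j (by omega)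
      have heq : x i = x j := by
        have h2 : (x i).2 = (x j).2 := by omega
        exact Prod.ext hfij' h2
      rcases Nat.lt_or_ge i j with hlt | hge
      · exact hinj i (by omega) j (by omega) hlt heq
      · exact hinj j (by omega) i (by omega) (by omega) heq.symm
  rw [Finset.card_range, Finset.card_range] at hcard
  have hn1 : (x 0).2 < n := hsecond 0 (by omega)
  omega


lemma tens_zero_right {n : ℕ} (A : MatN n) : tens A (0 : MatN n) = 0 := by
  ext p r; simp [tens]

lemma X_mul_X_zero2 {n : ℕ} {x y : (ℕ×ℕ)×(ℕ×ℕ)} (h : x.1.1 ≠ y.1.2) :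
    Xm n x * Xm n y = 0 := by
  rw [Xm, Xm, tens_mul, E_mul_E_zero h, tens_zero_right]

/-- enumeration of all quadruples, ordered with `p.1` (ascending) as outermost key -/
def allPairs (n : ℕ) : List ((ℕ × ℕ) × (ℕ × ℕ)) :=
  (List.range n).flatMap fun i =>
    (List.range n).flatMap fun j =>
      (List.range n).flatMap fun k =>
        (List.range n).map fun l => ((i, j), (k, l))

lemma mem_inner4 {n : ℕ} {x : (ℕ×ℕ)×(ℕ×ℕ)} {i j k : ℕ}
    (h : x ∈ (List.range n).map fun l => ((i,j),(k,l))) :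
    x.1.1 = i ∧ x.1.2 = j ∧ x.2.1 = k := by
  simp only [List.mem_map] at h
  obtain ⟨l, _, rfl⟩ := h
  exact ⟨rfl, rfl, rfl⟩

lemma mem_inner3 {n : ℕ} {x : (ℕ×ℕ)×(ℕ×ℕ)} {i j : ℕ}
    (h : x ∈ (List.range n).flatMap fun k => (List.range n).map fun l => ((i,j),(k,l))) :
    x.1.1 = i ∧ x.1.2 = j := by
  simp only [List.mem_flatMap] at h
  obtain ⟨k, _, hk⟩ := h
  exact ⟨(mem_inner4 hk).1, (mem_inner4 hk).2.1⟩

lemma mem_inner2 {n : ℕ} {x : (ℕ×ℕ)×(ℕ×ℕ)} {i : ℕ}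
    (h : x ∈ (List.range n).flatMap fun j => (List.range n).flatMap fun k =>
      (List.range n).map fun l => ((i,j),(k,l))) :
    x.1.1 = i := by
  simp only [List.mem_flatMap] at h
  obtain ⟨j, _, k, _, hk⟩ := h
  exact (mem_inner4 hk).1

lemma mem_allPairs {n : ℕ} (pq : (ℕ×ℕ)×(ℕ×ℕ)) :
    pq ∈ allPairs n ↔ pq.1.1 < n ∧ pq.1.2 < n ∧ pq.2.1 < n ∧ pq.2.2 < n := by
  obtain ⟨⟨i,j⟩,k,l⟩ := pq
  simp only [allPairs, List.mem_flatMap, List.mem_map, List.mem_range]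
  constructor
  · rintro ⟨i',hi',j',hj',k',hk',l',hl',heq⟩
    simp only [Prod.mk.injEq] at heq
    obtain ⟨⟨rfl,rfl⟩,rfl,rfl⟩ := heq
    exact ⟨hi',hj',hk',hl'⟩
  · rintro ⟨h1,h2,h3,h4⟩
    exact ⟨i,h1,j,h2,k,h3,l,h4,rfl⟩

lemma nodup_allPairs {n : ℕ} : (allPairs n).Nodup := by
  show List.Pairwise _ _
  apply pairwise_flatMap
  · intro i _
    apply pairwise_flatMap
    · intro j _
      apply pairwise_flatMap
      · intro k _
        rw [List.pairwise_map]
        apply (List.pairwise_lt_range (n := n)).imp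
        intro a b hab heq
        simp only [Prod.mk.injEq] at heq
        omega
      · apply (List.pairwise_lt_range (n := n)).imp
        intro k k' hkk' x hx y hy heq
        have h1 := (mem_inner4 hx).2.2
        have h2 := (mem_inner4 hy).2.2
        rw [heq] at h1
        omega
    · apply (List.pairwise_lt_range (n := n)).imp
      intro j j' hjj' x hx y hy heq
      have h1 := (mem_inner3 hx).2
      have h2 := (mem_inner3 hy).2
      rw [heq] at h1
      omega
  · apply (List.pairwise_lt_range (n := n)).imp
    intro i i' hii' x hx y hy heq
    have h1 := mem_inner2 hx
    have h2 := mem_inner2 hy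
    rw [heq] at h1
    omega

lemma allPairs_key {n : ℕ} : (allPairs n).Pairwise (fun x y => x.1.1 ≤ y.1.1) := by
  apply pairwise_flatMap
  · intro i _
    apply List.pairwise_of_forall_mem_list
    intro x hx y hy
    rw [mem_inner2 hx, mem_inner2 hy]
  · apply (List.pairwise_lt_range (n := n)).imp
    intro i i' hii' x hx y hy
    rw [mem_inner2 hx, mem_inner2 hy]
    omega

lemma sumRoots_eq_list {n : ℕ} (f : ℕ × ℕ → ℕ × ℕ → MatT n) :
    sumRoots n f = ((allPairs n).map fun pq => f pq.1 pq.2).sum := by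
  simp only [sumRoots, allPairs]
  rw [sum_map_flatMap, sum_map_range]
  apply Finset.sum_congr rfl; intro i _
  rw [sum_map_flatMap, sum_map_range]
  apply Finset.sum_congr rfl; intro j _
  rw [sum_map_flatMap, sum_map_range]
  apply Finset.sum_congr rfl; intro k _
  rw [List.map_map, sum_map_range]
  rfl

/-- all pairs `α ≺ β` at level exactly `i` -/
def levelList (T : BDTriple n) (i : ℕ) : List ((ℕ×ℕ)×(ℕ×ℕ)) :=
  (allPairs n).filter fun pq => decide (precK T i pq.1 pq.2)

lemma mem_levelList {T : BDTriple n} {i : ℕ} {pq : (ℕ×ℕ)×(ℕ×ℕ)} (hi : 1 ≤ i) :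
    pq ∈ levelList T i ↔ precK T i pq.1 pq.2 := by
  rw [levelList, List.mem_filter]
  simp only [decide_eq_true_eq]
  constructor
  · exact fun h => h.2
  · intro h
    refine ⟨?_, h⟩
    rw [mem_allPairs]
    obtain ⟨i', rfl⟩ : ∃ i', i = i' + 1 := ⟨i - 1, by omega⟩
    have := precK_bounds h
    omega

/-- the full ordered list of pairs `α ≺ β` -/
def bigList (T : BDTriple n) : List ((ℕ×ℕ)×(ℕ×ℕ)) :=
  (List.range n).flatMap fun i => levelList T (i+1)

lemma mem_bigList {T : BDTriple n} {pq : (ℕ×ℕ)×(ℕ×ℕ)} :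
    pq ∈ bigList T ↔ prec T pq.1 pq.2 := by
  rw [bigList, List.mem_flatMap]
  constructor
  · rintro ⟨i, _, hpq⟩
    exact ⟨i, (mem_levelList (by omega)).mp hpq⟩
  · rintro ⟨k, hk⟩
    have hb := level_bound hk
    exact ⟨k, by rw [List.mem_range]; omega, (mem_levelList (by omega)).mpr hk⟩

lemma nodup_bigList {T : BDTriple n} : (bigList T).Nodup := by
  show List.Pairwise _ _
  apply pairwise_flatMap
  · intro i _
    exact nodup_allPairs.filter _
  · apply (List.pairwise_lt_range (n := n)).imp
    intro i i' hii' x hx y hy heq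
    rw [mem_levelList (by omega)] at hx hy
    rw [heq] at hx
    exact absurd (level_unique hx hy) (by omega)

lemma pairwise_level {T : BDTriple n} : (bigList T).Pairwise
    (fun x y => ∀ a b, precK T (a+1) x.1 x.2 → precK T (b+1) y.1 y.2 → a ≤ b) := by
  apply pairwise_flatMap
  · intro i _
    apply List.pairwise_of_forall_mem_list
    intro x hx y hy a b ha hb
    rw [mem_levelList (by omega)] at hx hy
    have h1 := level_unique ha hx
    have h2 := level_unique hb hy
    omega
  · apply (List.pairwise_lt_range (n := n)).imp
    intro i i' hii' x hx y hy a b ha hb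
    rw [mem_levelList (by omega)] at hx hy
    have h1 := level_unique ha hx
    have h2 := level_unique hb hy
    omega

lemma pairwise_ann {T : BDTriple n} {i : ℕ} (s : ((ℕ×ℕ)×(ℕ×ℕ)) → ℂ) :
    ((levelList T (i+1)).map fun pq => s pq • Xm n pq).Pairwise (fun a b => a * b = 0) := by
  rw [List.pairwise_map]
  have hkey : (levelList T (i+1)).Pairwise (fun x y => x.1.1 ≤ y.1.1) :=
    List.Pairwise.sublist List.filter_sublist allPairs_key
  apply hkey.imp_of_mem
  intro x y hx hy hxy
  rw [mem_levelList (by omega)] at hy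
  have hy2 : y.1.1 < y.1.2 := (precK_bounds hy).1
  rw [smul_mul_assoc, mul_smul_comm, X_mul_X_zero2 (by omega), smul_zero, smul_zero]

def sFun (q : ℝ) (T : BDTriple n) (pq : (ℕ×ℕ)×(ℕ×ℕ)) : ℂ :=
  sgn T pq.1 pq.2 * ((q : ℂ) - (q : ℂ)⁻¹) * qpow q (Kc T pq.1 pq.2)

lemma Jlevel_eq (q : ℝ) (T : BDTriple n) (i : ℕ) :
    Jlevel q T (i+1) = ((levelList T (i+1)).map fun pq =>
      (1 : MatT n) + (sgn T pq.1 pq.2 * ((q : ℂ) - (q : ℂ)⁻¹) * qpow q (Kc T pq.1 pq.2)) •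
        tens (E n pq.2.1 pq.2.2) (E n pq.1.2 pq.1.1)).prod := by
  have hmap : ((levelList T (i+1)).map fun pq => (1:MatT n) + sFun q T pq • Xm n pq)
      = ((levelList T (i+1)).map fun pq => sFun q T pq • Xm n pq).map (fun a => 1 + a) := by
    rw [List.map_map]
    rfl
  have hsum : sumRoots n (fun p r => if precK T (i+1) p r then
        (((q : ℂ) - (q : ℂ)⁻¹) * sgn T p r * qpow q (Kc T p r)) • tens (E n r.1 r.2) (E n p.2 p.1)
        else 0)
      = ((levelList T (i+1)).map fun pq => sFun q T pq • Xm n pq).sum := by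
    rw [sumRoots_eq_list, levelList, ← sum_map_filter]
    apply congrArg
    apply List.map_congr_left
    intro pq _
    by_cases h : precK T (i+1) pq.1 pq.2
    · rw [if_pos h, if_pos h, sFun, Xm]
      congr 1
      ring
    · rw [if_neg h, if_neg h]
  show (1 : MatT n) + sumRoots n (fun p r => if precK T (i+1) p r then
        (((q : ℂ) - (q : ℂ)⁻¹) * sgn T p r * qpow q (Kc T p r)) • tens (E n r.1 r.2) (E n p.2 p.1)
        else 0)
      = ((levelList T (i+1)).map fun pq => (1:MatT n) + sFun q T pq • Xm n pq).prod
  rw [hsum, hmap, prod_one_add _ (pairwise_ann (sFun q T))]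

lemma Jmat_eq (q : ℝ) (T : BDTriple n) :
    Jmat q T = ((bigList T).map fun pq =>
      (1 : MatT n) + (sgn T pq.1 pq.2 * ((q : ℂ) - (q : ℂ)⁻¹) * qpow q (Kc T pq.1 pq.2)) •
        tens (E n pq.2.1 pq.2.2) (E n pq.1.2 pq.1.1)).prod := by
  rw [Jmat, bigList, prod_map_flatMap]
  congr 1
  apply List.map_congr_left
  intro i _
  exact Jlevel_eq q T i

lemma Jmat_mul_rev (q : ℝ) (T : BDTriple n) :
    Jmat q T * ((bigList T).reverse.map fun pq =>
      (1 : MatT n) - (sgn T pq.1 pq.2 * ((q : ℂ) - (q : ℂ)⁻¹) * qpow q (Kc T pq.1 pq.2)) •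
        tens (E n pq.2.1 pq.2.2) (E n pq.1.2 pq.1.1)).prod = 1 := by
  rw [Jmat_eq]
  apply prod_mul_reverse
  intro pq hpq
  rw [mem_bigList] at hpq
  obtain ⟨k, hk⟩ := hpq
  have hb := (precK_bounds hk).1
  set s : ℂ := sgn T pq.1 pq.2 * ((q : ℂ) - (q : ℂ)⁻¹) * qpow q (Kc T pq.1 pq.2) with hs
  have hXX : (s • Xm n pq) * (s • Xm n pq) = 0 := by
    rw [smul_mul_assoc, mul_smul_comm, X_mul_X_zero2 (by omega), smul_zero, smul_zero]
  have hexp : ∀ A : MatT n, A * A = 0 → (1 + A) * (1 - A) = 1 := by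
    intro A hA
    have h2 : (1 + A) * (1 - A) = 1 - A * A := by noncomm_ring
    rw [h2, hA, sub_zero]
  exact hexp _ hXX


/-- product formulas for `J` and `J⁻¹` over a suitable total ordering of
`X = {(α,β) : α ≺ β}` refining the grading by the power of `τ` (the order is encoded by
the enumeration `L` of `X`; `Π^>` is the product over the reversed list). -/
theorem stmt_16 {n : ℕ} (hn : 2 ≤ n) (q : ℝ) (hq : 0 < q) (hq1 : q ≠ 1)
    (T : BDTriple n) :
    ∃ L : List ((ℕ × ℕ) × (ℕ × ℕ)),
      L.Nodup ∧
      (∀ pq : (ℕ × ℕ) × (ℕ × ℕ), pq ∈ L ↔ prec T pq.1 pq.2) ∧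
      (∀ (a b ia ib : ℕ) (ha : ia < L.length) (hb : ib < L.length),
        precK T (a + 1) (L.get ⟨ia, ha⟩).1 (L.get ⟨ia, ha⟩).2 →
        precK T (b + 1) (L.get ⟨ib, hb⟩).1 (L.get ⟨ib, hb⟩).2 →
        a < b → ia < ib) ∧
      Jmat q T = (L.map fun pq =>
        (1 : MatT n) + (sgn T pq.1 pq.2 * ((q : ℂ) - (q : ℂ)⁻¹) * qpow q (Kc T pq.1 pq.2)) •
          tens (E n pq.2.1 pq.2.2) (E n pq.1.2 pq.1.1)).prod ∧
      (Jmat q T)⁻¹ = (L.reverse.map fun pq =>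
        (1 : MatT n) - (sgn T pq.1 pq.2 * ((q : ℂ) - (q : ℂ)⁻¹) * qpow q (Kc T pq.1 pq.2)) •
          tens (E n pq.2.1 pq.2.2) (E n pq.1.2 pq.1.1)).prod := by
  refine ⟨bigList T, nodup_bigList, fun pq => mem_bigList, ?_, Jmat_eq q T, ?_⟩
  · intro a b ia ib ha hb hA hB hab
    by_contra hle
    push_neg at hle
    rcases Nat.lt_or_ge ib ia with hlt | hge
    · have hpw := List.pairwise_iff_get.mp pairwise_level ⟨ib, hb⟩ ⟨ia, ha⟩ hlt
      have := hpw b a hB hA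
      omega
    · have hia : ia = ib := by omega
      subst hia
      have : (⟨ia, ha⟩ : Fin (bigList T).length) = ⟨ia, hb⟩ := rfl
      rw [this] at hA
      have := level_unique hA hB
      omega
  · apply Matrix.inv_eq_right_inv
    exact Jmat_mul_rev q T


end
end GGS
end

section
/- Let M be a monoid containing elements r_{ij}^{ab} for 1 ≤ i < j ≤ 3 and 1 ≤ a < b ≤ n, satisfying: (1) r_{ij}^{ab} r_{kl}^{cd} = r_{kl}^{cd} r_{ij}^{ab} whenever {(i,a),(j,b)} ∩ {(k,c),(l,d)} = ∅; and (2) r_{12}^{ab} r_{13}^{ac} r_{23}^{bc} = r_{23}^{bc} r_{13}^{ac} r_{12}^{ab} for all 1 ≤ a < b < c ≤ n. Then (Π_{i=1}^{n−1} Π_{j=1}^{n−i} r_{13}^{j,i+j} r_{12}^{j,i+j}) · (Π_{i=1}^{n−1} Π_{j=1}^{n−i} r_{23}^{j,i+j}) = (Π_{i=1}^{n−1} Π_{j=1}^{n−i} r_{13}^{j,i+j} r_{23}^{j,i+j}) · (Π_{i=1}^{n−1} Π_{j=1}^{n−i} r_{12}^{j,i+j}), all products taken left to right in lexicographic order of (i,j).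 -/
namespace Stmt17Aux

open List

variable {M : Type*} [Monoid M]

lemma pull' {ι : Type*} (F G : ι → M) :
    ∀ (l : List ι), (l.Pairwise fun i k => Commute (G i) (F k)) →
    (l.map fun i => F i * G i).prod = (l.map F).prod * (l.map G).prod := by
  intro l
  induction l with
  | nil => intro _; simp
  | cons a l ih =>
    intro h
    rcases pairwise_cons.mp h with ⟨h1, h2⟩
    have hc : Commute (G a) ((l.map F)).prod :=
      Commute.list_prod_right _ _ (by
        rintro y hy
        rcases mem_map.mp hy with ⟨q, hq, rfl⟩
        exact h1 q hq)
    simp only [map_cons, prod_cons, ih h2]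
    rw [← mul_assoc, mul_assoc (F a), hc.eq, ← mul_assoc, mul_assoc]

lemma bubble' {ι : Type*} (F G : ι → M) (y : M) :
    ∀ (l : List ι), (∀ i ∈ l, F i * G i * y = y * (G i * F i)) →
    (l.map fun i => F i * G i).prod * y = y * (l.map fun i => G i * F i).prod := by
  intro l
  induction l with
  | nil => intro _; simp
  | cons a l ih =>
    intro h
    simp only [map_cons, prod_cons]
    rw [mul_assoc, ih (fun p hp => h p (mem_cons_of_mem a hp)), ← mul_assoc,
      h a mem_cons_self, mul_assoc]

lemma prod_flatMap (f : ℕ × ℕ → M) (g : ℕ → List (ℕ × ℕ)) :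
    ∀ (L : List ℕ), ((L.flatMap g).map f).prod = (L.map fun i => ((g i).map f).prod).prod := by
  intro L
  induction L with
  | nil => simp
  | cons a L ih => simp [flatMap_cons, ih]

lemma pairwise_range {m : ℕ} {P : ℕ → ℕ → Prop} (h : ∀ i k, i < k → k < m → P i k) :
    (range m).Pairwise P :=
  List.Pairwise.imp_of_mem (fun ha hb hab => h _ _ hab (mem_range.mp hb))
    pairwise_lt_range

def row (m i : ℕ) : List (ℕ × ℕ) := (range (m - 1 - i)).map fun j => (j+1, i+1+(j+1))

def pairsL (m : ℕ) : List (ℕ × ℕ) := (range (m-1)).flatMap (row m)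

lemma mem_row {m i : ℕ} {q : ℕ × ℕ} (h : q ∈ row m i) :
    ∃ j, j < m - 1 - i ∧ q = (j+1, i+1+(j+1)) := by
  rcases mem_map.mp h with ⟨j, hj, rfl⟩
  exact ⟨j, mem_range.mp hj, rfl⟩

lemma mem_pairsL {m : ℕ} {q : ℕ × ℕ} (h : q ∈ pairsL m) :
    1 ≤ q.1 ∧ q.1 < q.2 ∧ q.2 ≤ m := by
  rcases mem_flatMap.mp h with ⟨i, hi, hq⟩
  rcases mem_row hq with ⟨j, hj, rfl⟩
  have hi' := mem_range.mp hi
  refine ⟨by simp, by simp, ?_⟩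
  simp only
  omega

lemma row_succ {m i : ℕ} (hi : i < m) :
    row (m+1) i = row m i ++ [(m-i, m+1)] := by
  unfold row
  rw [show m + 1 - 1 - i = (m - 1 - i) + 1 by omega, range_succ, map_append]
  congr 1
  rw [map_singleton, show ((m-1-i)+1, i+1+((m-1-i)+1)) = (m-i, m+1) from by
    simp only [Prod.mk.injEq]; omega]

lemma decomp (f : ℕ × ℕ → M) (m : ℕ)
    (hf : ∀ i k, i < k → k < m → ∀ q ∈ row m k, Commute (f (m - i, m+1)) (f q)) :
    ((pairsL (m+1)).map f).prod
      = ((pairsL m).map f).prod * ((range m).map fun i => f (m-i, m+1)).prod := by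
  have h1 : ((pairsL (m+1)).map f).prod
      = ((range m).map fun i => ((row m i).map f).prod * f (m-i, m+1)).prod := by
    rw [show pairsL (m+1) = (range m).flatMap (row (m+1)) from by simp [pairsL],
      prod_flatMap]
    congr 1
    apply map_congr_left
    intro i hi
    rw [row_succ (mem_range.mp hi), map_append, prod_append]
    simp
  rw [h1, pull' (fun i => ((row m i).map f).prod) (fun i => f (m-i, m+1)) (range m)
    (pairwise_range fun i k hik hkm => Commute.list_prod_right _ _ (by
      rintro y hy
      rcases mem_map.mp hy with ⟨q, hq, rfl⟩
      exact hf i k hik hkm q hq))]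
  congr 1
  rw [pairsL, prod_flatMap]
  cases m with
  | zero => simp
  | succ s =>
    rw [show s + 1 - 1 = s from rfl, range_succ, map_append, prod_append]
    simp [row]


variable {M : Type*} [Monoid M]

def Hc (n : ℕ) (r : ℕ → ℕ → ℕ → ℕ → M) : Prop :=
  ∀ i j k l a b c d : ℕ,
    1 ≤ i → i < j → j ≤ 3 → 1 ≤ k → k < l → l ≤ 3 →
    1 ≤ a → a < b → b ≤ n → 1 ≤ c → c < d → d ≤ n →
    (i, a) ≠ (k, c) → (i, a) ≠ (l, d) → (j, b) ≠ (k, c) → (j, b) ≠ (l, d) →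
    r i j a b * r k l c d = r k l c d * r i j a b

variable {n : ℕ} {r : ℕ → ℕ → ℕ → ℕ → M}

lemma c12_13 (h : Hc n r) {a b c d : ℕ} (h1 : 1 ≤ a) (h2 : a < b) (h3 : b ≤ n)
    (h4 : 1 ≤ c) (h5 : c < d) (h6 : d ≤ n) (hne : a ≠ c) :
    Commute (r 1 2 a b) (r 1 3 c d) :=
  h 1 2 1 3 a b c d (by omega) (by omega) (by omega) (by omega) (by omega) (by omega)
    h1 h2 h3 h4 h5 h6 (by simp [hne]) (by simp) (by simp) (by simp)

lemma c12_23 (h : Hc n r) {a b c d : ℕ} (h1 : 1 ≤ a) (h2 : a < b) (h3 : b ≤ n)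
    (h4 : 1 ≤ c) (h5 : c < d) (h6 : d ≤ n) (hne : b ≠ c) :
    Commute (r 1 2 a b) (r 2 3 c d) :=
  h 1 2 2 3 a b c d (by omega) (by omega) (by omega) (by omega) (by omega) (by omega)
    h1 h2 h3 h4 h5 h6 (by simp) (by simp) (by simp [hne]) (by simp)

lemma c13_23 (h : Hc n r) {a b c d : ℕ} (h1 : 1 ≤ a) (h2 : a < b) (h3 : b ≤ n)
    (h4 : 1 ≤ c) (h5 : c < d) (h6 : d ≤ n) (hne : b ≠ d) :
    Commute (r 1 3 a b) (r 2 3 c d) :=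
  h 1 3 2 3 a b c d (by omega) (by omega) (by omega) (by omega) (by omega) (by omega)
    h1 h2 h3 h4 h5 h6 (by simp) (by simp) (by simp) (by simp [hne])

lemma c12_12 (h : Hc n r) {a b c d : ℕ} (h1 : 1 ≤ a) (h2 : a < b) (h3 : b ≤ n)
    (h4 : 1 ≤ c) (h5 : c < d) (h6 : d ≤ n) (hne : a ≠ c) (hne' : b ≠ d) :
    Commute (r 1 2 a b) (r 1 2 c d) :=
  h 1 2 1 2 a b c d (by omega) (by omega) (by omega) (by omega) (by omega) (by omega)
    h1 h2 h3 h4 h5 h6 (by simp [hne]) (by simp) (by simp) (by simp [hne'])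

lemma c13_13 (h : Hc n r) {a b c d : ℕ} (h1 : 1 ≤ a) (h2 : a < b) (h3 : b ≤ n)
    (h4 : 1 ≤ c) (h5 : c < d) (h6 : d ≤ n) (hne : a ≠ c) (hne' : b ≠ d) :
    Commute (r 1 3 a b) (r 1 3 c d) :=
  h 1 3 1 3 a b c d (by omega) (by omega) (by omega) (by omega) (by omega) (by omega)
    h1 h2 h3 h4 h5 h6 (by simp [hne]) (by simp) (by simp) (by simp [hne'])

lemma c23_23 (h : Hc n r) {a b c d : ℕ} (h1 : 1 ≤ a) (h2 : a < b) (h3 : b ≤ n)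
    (h4 : 1 ≤ c) (h5 : c < d) (h6 : d ≤ n) (hne : a ≠ c) (hne' : b ≠ d) :
    Commute (r 2 3 a b) (r 2 3 c d) :=
  h 2 3 2 3 a b c d (by omega) (by omega) (by omega) (by omega) (by omega) (by omega)
    h1 h2 h3 h4 h5 h6 (by simp [hne]) (by simp) (by simp) (by simp [hne'])


def DP (r : ℕ → ℕ → ℕ → ℕ → M) (m : ℕ) : M :=
  ((pairsL m).map fun q => r 1 2 q.1 q.2).prod
def XP (r : ℕ → ℕ → ℕ → ℕ → M) (m v : ℕ) : M :=
  ((range m).map fun i => r 1 3 (m-i) v).prod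
def YP (r : ℕ → ℕ → ℕ → ℕ → M) (m v : ℕ) : M :=
  ((range m).map fun i => r 2 3 (m-i) v).prod
def CP (r : ℕ → ℕ → ℕ → ℕ → M) (m v : ℕ) : M :=
  ((range m).map fun i => r 1 3 (m-i) v * r 2 3 (m-i) v).prod
def GP (r : ℕ → ℕ → ℕ → ℕ → M) (m : ℕ) : M :=
  ((range m).map fun i => r 1 2 (m-i) (m+1)).prod

lemma XP_succ (m v : ℕ) : XP r (m+1) v = r 1 3 (m+1) v * XP r m v := by
  simp [XP, range_succ_eq_map, List.map_map, Function.comp_def, Nat.succ_sub_succ]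
lemma YP_succ (m v : ℕ) : YP r (m+1) v = r 2 3 (m+1) v * YP r m v := by
  simp [YP, range_succ_eq_map, List.map_map, Function.comp_def, Nat.succ_sub_succ]
lemma CP_succ (m v : ℕ) : CP r (m+1) v = r 1 3 (m+1) v * r 2 3 (m+1) v * CP r m v := by
  simp [CP, range_succ_eq_map, List.map_map, Function.comp_def, Nat.succ_sub_succ, mul_assoc]

def Hy (n : ℕ) (r : ℕ → ℕ → ℕ → ℕ → M) : Prop :=
  ∀ a b c : ℕ, 1 ≤ a → a < b → b < c → c ≤ n →
    r 1 2 a b * r 1 3 a c * r 2 3 b c = r 2 3 b c * r 1 3 a c * r 1 2 a b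

lemma star (h : Hc n r) (hy : Hy n r) {m v : ℕ} (hm : m + 1 < v) (hv : v ≤ n) :
    GP r m * (XP r m v * (r 2 3 (m+1) v * YP r m v))
      = r 2 3 (m+1) v * (XP r m v * (YP r m v * GP r m)) := by
  set y := r 2 3 (m+1) v with hy'
  have ha : GP r m * XP r m v
      = ((range m).map fun i => r 1 2 (m-i) (m+1) * r 1 3 (m-i) v).prod :=
    (pull' (fun i => r 1 2 (m-i) (m+1)) (fun i => r 1 3 (m-i) v) (range m)
      (pairwise_range fun i k hik hkm =>
        (c12_13 h (by omega) (by omega) (by omega) (by omega) (by omega) hv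
          (by omega)).symm)).symm
  have hb : ((range m).map fun i => r 1 2 (m-i) (m+1) * r 1 3 (m-i) v).prod * y
      = y * ((range m).map fun i => r 1 3 (m-i) v * r 1 2 (m-i) (m+1)).prod := by
    apply bubble'
    intro i hi
    have hi' := mem_range.mp hi
    have := hy (m-i) (m+1) v (by omega) (by omega) (by omega) hv
    rw [hy', this, mul_assoc]
  have hc : ((range m).map fun i => r 1 3 (m-i) v * r 1 2 (m-i) (m+1)).prod
      = XP r m v * GP r m :=
    pull' (fun i => r 1 3 (m-i) v) (fun i => r 1 2 (m-i) (m+1)) (range m)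
      (pairwise_range fun i k hik hkm =>
        c12_13 h (by omega) (by omega) (by omega) (by omega) (by omega) hv (by omega))
  have hd : Commute (GP r m) (YP r m v) := by
    apply Commute.list_prod_left
    rintro z hz
    rcases mem_map.mp hz with ⟨i, hi, rfl⟩
    have hi' := mem_range.mp hi
    apply Commute.list_prod_right
    rintro w hw
    rcases mem_map.mp hw with ⟨k, hk, rfl⟩
    have hk' := mem_range.mp hk
    exact c12_23 h (by omega) (by omega) (by omega) (by omega) (by omega) hv (by omega)
  calc GP r m * (XP r m v * (y * YP r m v))
      = ((GP r m * XP r m v) * y) * YP r m v := by simp only [mul_assoc]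
    _ = y * (XP r m v * GP r m) * YP r m v := by rw [ha, hb, hc]
    _ = y * (XP r m v * (GP r m * YP r m v)) := by simp only [mul_assoc]
    _ = y * (XP r m v * (YP r m v * GP r m)) := by rw [hd.eq]

lemma sub (h : Hc n r) (hy : Hy n r) {v : ℕ} (hv : v ≤ n) :
    ∀ m, m < v → DP r m * (XP r m v * YP r m v) = CP r m v * DP r m := by
  intro m
  induction m with
  | zero => simp [DP, XP, YP, CP, pairsL]
  | succ m ih =>
    intro hm
    have ihm := ih (by omega)
    have hD : DP r (m+1) = DP r m * GP r m := by
      apply decomp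
      intro i k hik hkm q hq
      rcases mem_row hq with ⟨j, hj, rfl⟩
      exact c12_12 h (by omega) (by omega) (by omega) (by omega) (by omega) (by omega)
        (by omega) (by omega)
    have hc1 : Commute (r 1 3 (m+1) v) (GP r m) := by
      apply Commute.list_prod_right
      rintro z hz
      rcases mem_map.mp hz with ⟨i, hi, rfl⟩
      have hi' := mem_range.mp hi
      exact (c12_13 h (by omega) (by omega) (by omega) (by omega) hm hv (by omega)).symm
    have hc2 : Commute (DP r m) (r 1 3 (m+1) v) := by
      apply Commute.list_prod_left
      rintro z hz
      rcases mem_map.mp hz with ⟨q, hq, rfl⟩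
      have hq' := mem_pairsL hq
      exact c12_13 h (by omega) (by omega) (by omega) (by omega) hm hv (by omega)
    have hc3 : Commute (DP r m) (r 2 3 (m+1) v) := by
      apply Commute.list_prod_left
      rintro z hz
      rcases mem_map.mp hz with ⟨q, hq, rfl⟩
      have hq' := mem_pairsL hq
      exact c12_23 h (by omega) (by omega) (by omega) (by omega) hm hv (by omega)
    have hstar := star h hy hm hv
    rw [hD, XP_succ, YP_succ, CP_succ]
    calc (DP r m * GP r m) * ((r 1 3 (m+1) v * XP r m v) * (r 2 3 (m+1) v * YP r m v))
        = DP r m * (GP r m * (r 1 3 (m+1) v * (XP r m v * (r 2 3 (m+1) v * YP r m v)))) := by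
          simp only [mul_assoc]
      _ = DP r m * (r 1 3 (m+1) v * (GP r m * (XP r m v * (r 2 3 (m+1) v * YP r m v)))) := by
          rw [← mul_assoc (GP r m), ← hc1.eq, mul_assoc]
      _ = r 1 3 (m+1) v * (DP r m * (GP r m * (XP r m v * (r 2 3 (m+1) v * YP r m v)))) := by
          rw [← mul_assoc, ← mul_assoc, hc2.eq, mul_assoc, mul_assoc]
      _ = r 1 3 (m+1) v * (DP r m * (r 2 3 (m+1) v * (XP r m v * (YP r m v * GP r m)))) := by
          rw [hstar]
      _ = r 1 3 (m+1) v * (r 2 3 (m+1) v * (DP r m * (XP r m v * (YP r m v * GP r m)))) := by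
          rw [← mul_assoc (DP r m), hc3.eq, mul_assoc]
      _ = r 1 3 (m+1) v * (r 2 3 (m+1) v * (CP r m v * (DP r m * GP r m))) := by
          rw [show XP r m v * (YP r m v * GP r m)
              = (XP r m v * YP r m v) * GP r m from by simp only [mul_assoc],
            ← mul_assoc (DP r m), ihm, mul_assoc]
      _ = (r 1 3 (m+1) v * r 2 3 (m+1) v * CP r m v) * (DP r m * GP r m) := by
          simp only [mul_assoc]

def AP (r : ℕ → ℕ → ℕ → ℕ → M) (m : ℕ) : M :=
  ((pairsL m).map fun q => r 1 3 q.1 q.2 * r 1 2 q.1 q.2).prod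
def BP (r : ℕ → ℕ → ℕ → ℕ → M) (m : ℕ) : M :=
  ((pairsL m).map fun q => r 2 3 q.1 q.2).prod
def CF (r : ℕ → ℕ → ℕ → ℕ → M) (m : ℕ) : M :=
  ((pairsL m).map fun q => r 1 3 q.1 q.2 * r 2 3 q.1 q.2).prod

lemma key (h : Hc n r) (hy : Hy n r) :
    ∀ k, k ≤ n → AP r k * BP r k = CF r k * DP r k := by
  intro k
  induction k with
  | zero => simp [AP, BP, CF, DP, pairsL]
  | succ k ih =>
    intro hk
    have ihk := ih (by omega)
    have hA : AP r (k+1) = AP r k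
        * ((range k).map fun i => r 1 3 (k-i) (k+1) * r 1 2 (k-i) (k+1)).prod := by
      have := decomp (M := M) (fun q => r 1 3 q.1 q.2 * r 1 2 q.1 q.2) k (by
        intro i kk hik hkm q hq
        rcases mem_row hq with ⟨j, hj, rfl⟩
        have c1 := c13_13 h (a := k - i) (b := k+1) (c := j+1) (d := kk+1+(j+1)) (by omega) (by omega) (by omega)
          (by omega) (by omega) (by omega) (by omega) (by omega)
        have c2 := (c12_13 h (a := j+1) (b := kk+1+(j+1)) (c := k - i) (d := k+1) (by omega) (by omega)
          (by omega) (by omega) (by omega) (by omega) (by omega)).symm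
        have c3 := c12_13 h (a := k - i) (b := k+1) (c := j+1) (d := kk+1+(j+1)) (by omega) (by omega) (by omega)
          (by omega) (by omega) (by omega) (by omega)
        have c4 := c12_12 h (a := k - i) (b := k+1) (c := j+1) (d := kk+1+(j+1)) (by omega) (by omega) (by omega)
          (by omega) (by omega) (by omega) (by omega) (by omega)
        exact (c1.mul_right c2).mul_left (c3.mul_right c4))
      simpa [AP] using this
    have hB : BP r (k+1) = BP r k * YP r k (k+1) := by
      have := decomp (M := M) (fun q => r 2 3 q.1 q.2) k (by
        intro i kk hik hkm q hq
        rcases mem_row hq with ⟨j, hj, rfl⟩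
        exact c23_23 h (a := k - i) (b := k+1) (c := j+1) (d := kk+1+(j+1)) (by omega) (by omega) (by omega)
          (by omega) (by omega) (by omega) (by omega) (by omega))
      simpa [BP, YP] using this
    have hC : CF r (k+1) = CF r k * CP r k (k+1) := by
      have := decomp (M := M) (fun q => r 1 3 q.1 q.2 * r 2 3 q.1 q.2) k (by
        intro i kk hik hkm q hq
        rcases mem_row hq with ⟨j, hj, rfl⟩
        have c1 := c13_13 h (a := k - i) (b := k+1) (c := j+1) (d := kk+1+(j+1)) (by omega) (by omega) (by omega)
          (by omega) (by omega) (by omega) (by omega) (by omega)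
        have c2 := c13_23 h (a := k - i) (b := k+1) (c := j+1) (d := kk+1+(j+1)) (by omega) (by omega) (by omega)
          (by omega) (by omega) (by omega) (by omega)
        have c3 := (c13_23 h (a := j+1) (b := kk+1+(j+1)) (c := k-i) (d := k+1) (by omega) (by omega)
          (by omega) (by omega) (by omega) (by omega) (by omega)).symm
        have c4 := c23_23 h (a := k - i) (b := k+1) (c := j+1) (d := kk+1+(j+1)) (by omega) (by omega) (by omega)
          (by omega) (by omega) (by omega) (by omega) (by omega)
        exact (c1.mul_right c2).mul_left (c3.mul_right c4))
      simpa [CF, CP] using this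
    have hD : DP r (k+1) = DP r k * GP r k := by
      have := decomp (M := M) (fun q => r 1 2 q.1 q.2) k (by
        intro i kk hik hkm q hq
        rcases mem_row hq with ⟨j, hj, rfl⟩
        exact c12_12 h (a := k - i) (b := k+1) (c := j+1) (d := kk+1+(j+1)) (by omega) (by omega) (by omega)
          (by omega) (by omega) (by omega) (by omega) (by omega))
      simpa [DP, GP] using this
    have hsplit : ((range k).map fun i => r 1 3 (k-i) (k+1) * r 1 2 (k-i) (k+1)).prod
        = XP r k (k+1) * GP r k :=
      pull' (fun i => r 1 3 (k-i) (k+1)) (fun i => r 1 2 (k-i) (k+1)) (range k)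
        (pairwise_range fun i kk hik hkm =>
          c12_13 h (by omega) (by omega) (by omega) (by omega) (by omega) (by omega)
            (by omega))
    have hXB : Commute (XP r k (k+1)) (BP r k) := by
      apply Commute.list_prod_left
      rintro z hz
      rcases mem_map.mp hz with ⟨i, hi, rfl⟩
      have hi' := mem_range.mp hi
      apply Commute.list_prod_right
      rintro w hw
      rcases mem_map.mp hw with ⟨q, hq, rfl⟩
      have hq' := mem_pairsL hq
      exact c13_23 h (by omega) (by omega) (by omega) (by omega) (by omega) (by omega)
        (by omega)
    have hGB : Commute (GP r k) (BP r k) := by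
      apply Commute.list_prod_left
      rintro z hz
      rcases mem_map.mp hz with ⟨i, hi, rfl⟩
      have hi' := mem_range.mp hi
      apply Commute.list_prod_right
      rintro w hw
      rcases mem_map.mp hw with ⟨q, hq, rfl⟩
      have hq' := mem_pairsL hq
      exact c12_23 h (by omega) (by omega) (by omega) (by omega) (by omega) (by omega)
        (by omega)
    have hGY : Commute (GP r k) (YP r k (k+1)) := by
      apply Commute.list_prod_left
      rintro z hz
      rcases mem_map.mp hz with ⟨i, hi, rfl⟩
      have hi' := mem_range.mp hi
      apply Commute.list_prod_right
      rintro w hw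
      rcases mem_map.mp hw with ⟨kk, hkk, rfl⟩
      have hkk' := mem_range.mp hkk
      exact c12_23 h (by omega) (by omega) (by omega) (by omega) (by omega) (by omega)
        (by omega)
    have hsub := sub h hy (v := k+1) hk k (lt_add_one k)
    rw [hA, hB, hC, hD, hsplit]
    calc (AP r k * (XP r k (k+1) * GP r k)) * (BP r k * YP r k (k+1))
        = AP r k * (XP r k (k+1) * (GP r k * (BP r k * YP r k (k+1)))) := by
          simp only [mul_assoc]
      _ = AP r k * (XP r k (k+1) * (BP r k * (GP r k * YP r k (k+1)))) := by
          rw [← mul_assoc (GP r k), hGB.eq, mul_assoc]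
      _ = AP r k * (BP r k * (XP r k (k+1) * (GP r k * YP r k (k+1)))) := by
          rw [← mul_assoc (XP r k (k+1)) (BP r k), hXB.eq, mul_assoc]
      _ = AP r k * (BP r k * (XP r k (k+1) * (YP r k (k+1) * GP r k))) := by
          rw [hGY.eq]
      _ = CF r k * (DP r k * (XP r k (k+1) * (YP r k (k+1) * GP r k))) := by
          rw [← mul_assoc, ihk, mul_assoc]
      _ = CF r k * (CP r k (k+1) * (DP r k * GP r k)) := by
          rw [show XP r k (k+1) * (YP r k (k+1) * GP r k)
              = (XP r k (k+1) * YP r k (k+1)) * GP r k from by simp only [mul_assoc],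
            ← mul_assoc (DP r k), hsub, mul_assoc]
      _ = (CF r k * CP r k (k+1)) * (DP r k * GP r k) := by simp only [mul_assoc]

lemma convert (n : ℕ) (F : ℕ → ℕ → M) :
    (((range (n-1)).map fun i =>
      ((range (n-1-i)).map fun j => F (j+1) (i+1+(j+1))).prod).prod)
      = ((pairsL n).map fun q => F q.1 q.2).prod := by
  rw [pairsL, prod_flatMap]
  apply congrArg
  apply map_congr_left
  intro i hi
  simp [row, List.map_map, Function.comp_def]

end Stmt17Aux


/-- a combinatorial lemma in an arbitrary monoid. Elements `r_{ij}^{ab}`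
(`1 ≤ i < j ≤ 3`, `1 ≤ a < b ≤ n`) satisfying the disjoint-index commutation relations
and the Yang–Baxter relations satisfy the stated product identity; all products are
taken left to right in lexicographic order of `(i,j)` (encoded by nested lists). -/
theorem stmt_17 {M : Type*} [Monoid M] (n : ℕ) (r : ℕ → ℕ → ℕ → ℕ → M)
    (hcomm : ∀ i j k l a b c d : ℕ,
      1 ≤ i → i < j → j ≤ 3 → 1 ≤ k → k < l → l ≤ 3 →
      1 ≤ a → a < b → b ≤ n → 1 ≤ c → c < d → d ≤ n →
      (i, a) ≠ (k, c) → (i, a) ≠ (l, d) → (j, b) ≠ (k, c) → (j, b) ≠ (l, d) →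
      r i j a b * r k l c d = r k l c d * r i j a b)
    (hybe : ∀ a b c : ℕ, 1 ≤ a → a < b → b < c → c ≤ n →
      r 1 2 a b * r 1 3 a c * r 2 3 b c = r 2 3 b c * r 1 3 a c * r 1 2 a b) :
    (((List.range (n - 1)).map fun i =>
        (((List.range (n - 1 - i)).map fun j =>
          r 1 3 (j + 1) (i + 1 + (j + 1)) * r 1 2 (j + 1) (i + 1 + (j + 1))).prod)).prod)
      * (((List.range (n - 1)).map fun i =>
        (((List.range (n - 1 - i)).map fun j =>
          r 2 3 (j + 1) (i + 1 + (j + 1))).prod)).prod)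
    = (((List.range (n - 1)).map fun i =>
        (((List.range (n - 1 - i)).map fun j =>
          r 1 3 (j + 1) (i + 1 + (j + 1)) * r 2 3 (j + 1) (i + 1 + (j + 1))).prod)).prod)
      * (((List.range (n - 1)).map fun i =>
        (((List.range (n - 1 - i)).map fun j =>
          r 1 2 (j + 1) (i + 1 + (j + 1))).prod)).prod) := by
  have e1 := Stmt17Aux.convert n (fun a b => r 1 3 a b * r 1 2 a b)
  have e2 := Stmt17Aux.convert n (fun a b => r 2 3 a b)
  have e3 := Stmt17Aux.convert n (fun a b => r 1 3 a b * r 2 3 a b)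
  have e4 := Stmt17Aux.convert n (fun a b => r 1 2 a b)
  rw [e1, e2, e3, e4]
  exact Stmt17Aux.key hcomm hybe n le_rfl
end

section
/- Let (Γ₁, Γ₂, τ) be a Belavin–Drinfeld triple and let x = Σ_i x_i E_{ii} be a diagonal matrix satisfying α(x) = (τα)(x) for every α ∈ Γ₁, where (e_i − e_j)(x) = x_i − x_j. Then x ⊗ 1 + 1 ⊗ x commutes with R̄_GGS and with R̄_J: (x⊗1 + 1⊗x)·R̄_GGS = R̄_GGS·(x⊗1 + 1⊗x) and (x⊗1 + 1⊗x)·R̄_J = R̄_J·(x⊗1 + 1⊗x). -/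
namespace GGS

open Finset
open scoped Classical

noncomputable section

variable {n : ℕ}

/-! ### Auxiliary machinery for statement 18 -/

/-- The weight function `w(p) = x_{p₁} + x_{p₂}` on pairs of indices. -/
def wt (x : ℕ → ℂ) : Fin n × Fin n → ℂ := fun p => x p.1 + x p.2

lemma comm_tens (x : ℕ → ℂ) (a b c d : ℕ) (h : x a + x c = x b + x d) :
    Commute (Matrix.diagonal (wt x) : MatT n) (tens (E n a b) (E n c d)) := by
  show _ = _
  ext p r
  rw [Matrix.diagonal_mul, Matrix.mul_diagonal]
  by_cases h1 : (p.1 : ℕ) = a ∧ (r.1 : ℕ) = b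
  · by_cases h2 : (p.2 : ℕ) = c ∧ (r.2 : ℕ) = d
    · simp only [tens, E, if_pos h1, if_pos h2, mul_one, one_mul, wt]
      rw [h1.1, h1.2, h2.1, h2.2, h]
    · simp [tens, E, h2]
  · simp [tens, E, h1]

lemma good_of_comm (x : ℕ → ℂ) (M : MatT n)
    (h : Commute (Matrix.diagonal (wt x) : MatT n) M)
    (p r : Fin n × Fin n) (hpr : M p r ≠ 0) : wt x p = wt x r := by
  have h2 : ((Matrix.diagonal (wt x) : MatT n) * M) p r = (M * (Matrix.diagonal (wt x) : MatT n)) p r :=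
    Matrix.ext_iff.2 h.eq p r
  rw [Matrix.diagonal_mul, Matrix.mul_diagonal] at h2
  exact mul_right_cancel₀ hpr (by rw [h2, mul_comm])

lemma comm_swap21 (x : ℕ → ℂ) (M : MatT n)
    (h : Commute (Matrix.diagonal (wt x) : MatT n) M) :
    Commute (Matrix.diagonal (wt x) : MatT n) (swap21 M) := by
  show _ = _
  ext p r
  rw [Matrix.diagonal_mul, Matrix.mul_diagonal]
  by_cases h0 : swap21 M p r = 0
  · rw [h0, mul_zero, zero_mul]
  · have h1 : M (p.2, p.1) (r.2, r.1) ≠ 0 := h0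
    have hw := good_of_comm x M h _ _ h1
    have hw2 : wt x p = wt x r := by
      simp only [wt] at hw ⊢
      linear_combination hw
    rw [hw2, mul_comm]

lemma comm_inv (D M : MatT n) (h : Commute D M) (hu : IsUnit M.det) :
    Commute D M⁻¹ := by
  have h1 : M⁻¹ * M = 1 := Matrix.nonsing_inv_mul M hu
  have h2 : M * M⁻¹ = 1 := Matrix.mul_nonsing_inv M hu
  show D * M⁻¹ = M⁻¹ * D
  calc D * M⁻¹ = M⁻¹ * M * (D * M⁻¹) := by rw [h1, one_mul]
    _ = M⁻¹ * (M * D) * M⁻¹ := by rw [mul_assoc, ← mul_assoc M D M⁻¹, ← mul_assoc]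
    _ = M⁻¹ * (D * M) * M⁻¹ := by rw [← h.eq]
    _ = M⁻¹ * D * (M * M⁻¹) := by rw [← mul_assoc M⁻¹ D M, mul_assoc (M⁻¹ * D) M M⁻¹]
    _ = M⁻¹ * D := by rw [h2, mul_one]

lemma comm_listprod (D : MatT n) (l : List (MatT n)) (h : ∀ M ∈ l, Commute D M) :
    Commute D l.prod := by
  induction l with
  | nil => simp only [List.prod_nil]; exact Commute.one_right D
  | cons a t ih =>
      rw [List.prod_cons]
      exact (h a (by simp)).mul_right (ih fun M hM => h M (by simp [hM]))

lemma tele (x : ℕ → ℂ) (a : ℕ) : ∀ b, a ≤ b →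
    ∑ k ∈ Finset.Ico a b, (x k - x (k + 1)) = x a - x b := by
  intro b hb
  induction b, hb using Nat.le_induction with
  | base => simp
  | succ b hb ih =>
      rw [Finset.sum_Ico_succ_top (by omega), ih]
      ring

lemma sum_rvec (x : ℕ → ℂ) (N a b : ℕ) (ha : a < N) (hb : b < N) :
    ∑ m ∈ range N, rvec a b m * x m = x a - x b := by
  simp only [rvec, evec, Pi.sub_apply, sub_mul, Finset.sum_sub_distrib, ite_mul, one_mul,
    zero_mul, Finset.sum_ite_eq', Finset.mem_range, ha, hb, if_true]

lemma wstep (T : BDTriple n) (x : ℕ → ℂ)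
    (hsym : ∀ s ∈ T.Γ1, x s - x (s + 1) = x (T.τ s) - x (T.τ s + 1))
    {p r : ℕ × ℕ} (h : tauStep T p r) : x p.1 - x p.2 = x r.1 - x r.2 := by
  obtain ⟨⟨hlt, hmem⟩, hrl, heq⟩ := h
  set N := n + r.1 + r.2 + 1 with hN
  have e1 : x r.1 - x r.2 = ∑ m ∈ range N, rvec r.1 r.2 m * x m :=
    (sum_rvec x N _ _ (by omega) (by omega)).symm
  rw [heq] at e1
  have e2 : ∀ m : ℕ, (∑ k ∈ Finset.Ico p.1 p.2, svec (T.τ k)) m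
      = ∑ k ∈ Finset.Ico p.1 p.2, svec (T.τ k) m := fun m => by
    simp [Finset.sum_apply]
  simp only [e2, Finset.sum_mul] at e1
  rw [Finset.sum_comm] at e1
  have e3 : ∀ k ∈ Finset.Ico p.1 p.2,
      ∑ m ∈ range N, svec (T.τ k) m * x m = x k - x (k + 1) := by
    intro k hk
    have hk1 : k ∈ T.Γ1 := hmem k (Finset.mem_Ico.1 hk).1 (Finset.mem_Ico.1 hk).2
    have hk2 : T.τ k ∈ T.Γ2 := T.bij.mapsTo hk1
    have hlt2 : T.τ k + 1 < n := T.mem2 _ hk2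
    have : svec (T.τ k) = rvec (T.τ k) (T.τ k + 1) := rfl
    rw [this, sum_rvec x N _ _ (by omega) (by omega)]
    exact (hsym k hk1).symm
  rw [Finset.sum_congr rfl e3, tele x p.1 p.2 hlt.le] at e1
  exact e1.symm

lemma wprecK (T : BDTriple n) (x : ℕ → ℂ)
    (hsym : ∀ s ∈ T.Γ1, x s - x (s + 1) = x (T.τ s) - x (T.τ s + 1)) :
    ∀ (k : ℕ) (p r : ℕ × ℕ), precK T k p r → x p.1 - x p.2 = x r.1 - x r.2
  | 0, p, r, h => by rw [show p = r from h]
  | (k + 1), p, r, h => by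
      obtain ⟨s, hs, h'⟩ := h
      exact (wstep T x hsym hs).trans (wprecK T x hsym k s r h')

lemma wprec (T : BDTriple n) (x : ℕ → ℂ)
    (hsym : ∀ s ∈ T.Γ1, x s - x (s + 1) = x (T.τ s) - x (T.τ s + 1))
    {p r : ℕ × ℕ} (h : prec T p r) : x p.1 - x p.2 = x r.1 - x r.2 := by
  obtain ⟨k, hk⟩ := h
  exact wprecK T x hsym (k + 1) p r hk

lemma precK_lt (T : BDTriple n) :
    ∀ (k : ℕ) (p r : ℕ × ℕ), precK T (k + 1) p r → r.1 < r.2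
  | 0, p, r, h => by
      obtain ⟨s, hs, h'⟩ := h
      rw [show s = r from h'] at hs
      exact hs.2.1
  | (k + 1), p, r, h => by
      obtain ⟨s, hs, h'⟩ := h
      exact precK_lt T k s r h'

lemma Jlevel_apply_of_not_lt (q : ℝ) (T : BDTriple n) (i : ℕ) (p r : Fin n × Fin n)
    (h : ¬ ((p.1 : ℕ) < (r.1 : ℕ))) : Jlevel q T (i + 1) p r = (1 : MatT n) p r := by
  unfold Jlevel sumRoots
  rw [Matrix.add_apply]
  convert add_zero ((1 : MatT n) p r) using 2
  simp only [Matrix.sum_apply]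
  refine Finset.sum_eq_zero fun a _ => Finset.sum_eq_zero fun b _ =>
    Finset.sum_eq_zero fun c _ => Finset.sum_eq_zero fun d _ => ?_
  by_cases hc : precK T (i + 1) (a, b) (c, d)
  · rw [if_pos hc]
    have hcd : c < d := precK_lt T i (a, b) (c, d) hc
    have hE : E n c d p.1 r.1 = 0 := by
      unfold E
      rw [if_neg]
      rintro ⟨h1, h2⟩
      omega
    simp [tens, Matrix.smul_apply, hE]
  · rw [if_neg hc]
    rfl

lemma Jlevel_det (q : ℝ) (T : BDTriple n) (i : ℕ) : (Jlevel q T (i + 1)).det = 1 := by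
  have hbt : (Jlevel q T (i + 1)).BlockTriangular (fun p => p.1) := by
    intro p r hlt
    rw [Jlevel_apply_of_not_lt q T i p r (by
      simp only [Fin.lt_def] at hlt; omega)]
    exact Matrix.one_apply_ne (by rintro rfl; exact lt_irrefl _ hlt)
  rw [Matrix.BlockTriangular.det hbt]
  refine Finset.prod_eq_one fun a _ => ?_
  have hblock : (Jlevel q T (i + 1)).toSquareBlock (fun p => p.1) a = 1 := by
    ext p r
    rw [Matrix.toSquareBlock_def, Matrix.of_apply]
    have hpr : ¬ (((p : Fin n × Fin n).1 : ℕ) < ((r : Fin n × Fin n).1 : ℕ)) := by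
      have hp := p.2
      have hr := r.2
      rw [hp, hr]
      omega
    rw [Jlevel_apply_of_not_lt q T i _ _ hpr]
    simp [Matrix.one_apply, Subtype.ext_iff]
  rw [hblock, Matrix.det_one]

lemma Jmat_det (q : ℝ) (T : BDTriple n) : (Jmat q T).det = 1 := by
  unfold Jmat
  rw [show ((List.range n).map fun i => Jlevel q T (i + 1)).prod.det
      = (Matrix.detMonoidHom (((List.range n).map fun i => Jlevel q T (i + 1)).prod) : ℂ) from rfl,
    map_list_prod]
  rw [List.map_map]
  apply List.prod_eq_one
  intro y hy
  simp only [List.mem_map, List.mem_range, Function.comp_apply] at hy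
  obtain ⟨i, _, rfl⟩ := hy
  exact Jlevel_det q T i

lemma X_diag (x : ℕ → ℂ) :
    tens (∑ i ∈ range n, x i • E n i i) (1 : MatN n)
      + tens (1 : MatN n) (∑ i ∈ range n, x i • E n i i)
      = Matrix.diagonal (wt x) := by
  have hD : ∀ a b : Fin n, (∑ i ∈ range n, x i • E n i i) a b
      = if a = b then x (a : ℕ) else 0 := by
    intro a b
    rw [Matrix.sum_apply]
    by_cases hab : a = b
    · subst hab
      rw [if_pos rfl, Finset.sum_eq_single (a : ℕ)]
      · simp [E, Matrix.smul_apply]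
      · intro i _ hne
        simp only [Matrix.smul_apply, E, smul_eq_mul]
        rw [if_neg (by rintro ⟨h1, _⟩; exact hne h1.symm), mul_zero]
      · intro hmem
        exact absurd (Finset.mem_range.2 a.isLt) hmem
    · rw [if_neg hab]
      refine Finset.sum_eq_zero fun i _ => ?_
      simp only [Matrix.smul_apply, E, smul_eq_mul]
      rw [if_neg (by rintro ⟨h1, h2⟩; exact hab (Fin.ext (h1.trans h2.symm))), mul_zero]
  ext p r
  rw [Matrix.add_apply, Matrix.diagonal_apply]
  simp only [tens, hD, Matrix.one_apply]
  by_cases h1 : p.1 = r.1 <;> by_cases h2 : p.2 = r.2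
  · rw [if_pos h1, if_pos h2, if_pos h1, if_pos h2,
      if_pos (show p = r from Prod.ext h1 h2)]
    simp [wt]
  · rw [if_pos h1, if_neg h2, if_neg h2,
      if_neg (show ¬ p = r from fun h => h2 (by rw [h]))]
    ring
  · rw [if_neg h1, if_pos h2, if_neg h1,
      if_neg (show ¬ p = r from fun h => h1 (by rw [h]))]
    ring
  · rw [if_neg h1, if_neg h2, if_neg h2,
      if_neg (show ¬ p = r from fun h => h1 (by rw [h]))]
    ring

/-- if `x` is a diagonal matrix with `α(x) = (τα)(x)` for all `α ∈ Γ₁`,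
then `x ⊗ 1 + 1 ⊗ x` commutes with `R̄_GGS` and with `R̄_J`. -/
theorem stmt_18 {n : ℕ} (hn : 2 ≤ n) (q : ℝ) (hq : 0 < q) (hq1 : q ≠ 1)
    (T : BDTriple n) (x : ℕ → ℂ)
    (hsym : ∀ s ∈ T.Γ1, x s - x (s + 1) = x (T.τ s) - x (T.τ s + 1)) :
    ∀ X : MatT n,
      X = tens (∑ i ∈ range n, x i • E n i i) 1 + tens 1 (∑ i ∈ range n, x i • E n i i) →
      X * RbarGGS q T = RbarGGS q T * X ∧ X * RbarJ q T = RbarJ q T * X := by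
  intro X hX
  have hXd : X = Matrix.diagonal (wt x) := by rw [hX, X_diag]
  set D : MatT n := Matrix.diagonal (wt x) with hD
  -- commutation with tensor terms coming from `α ≺ β`
  have hprec1 : ∀ p r : ℕ × ℕ, prec T p r →
      Commute D (tens (E n p.2 p.1) (E n r.1 r.2)) := by
    intro p r h
    have hw := wprec T x hsym h
    exact comm_tens x _ _ _ _ (by linear_combination -hw)
  have hprec2 : ∀ p r : ℕ × ℕ, prec T p r →
      Commute D (tens (E n r.1 r.2) (E n p.2 p.1)) := by
    intro p r h
    have hw := wprec T x hsym h
    exact comm_tens x _ _ _ _ (by linear_combination -hw)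
  -- commutation with R_s
  have hRs : Commute D (RsQ n q) := by
    unfold RsQ
    refine Commute.add_right (Commute.add_right ?_ ?_) ?_
    · refine Commute.smul_right ?_ _
      unfold P0
      exact Commute.sum_right _ _ _ fun i _ => comm_tens x i i i i rfl
    · refine Commute.sum_right _ _ _ fun i _ => Commute.sum_right _ _ _ fun j _ => ?_
      split_ifs with hij
      · exact comm_tens x i i j j rfl
      · exact Commute.zero_right D
    · refine Commute.smul_right ?_ _
      refine Commute.sum_right _ _ _ fun i _ => Commute.sum_right _ _ _ fun j _ => ?_
      split_ifs with hij
      · exact comm_tens x i j j i (add_comm _ _)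
      · exact Commute.zero_right D
  -- commutation with R̄_GGS
  have hGGS : Commute D (RbarGGS q T) := by
    unfold RbarGGS
    refine Commute.add_right hRs (Commute.smul_right ?_ _)
    unfold sumRoots
    refine Commute.sum_right _ _ _ fun i _ => Commute.sum_right _ _ _ fun j _ =>
      Commute.sum_right _ _ _ fun k _ => Commute.sum_right _ _ _ fun l _ => ?_
    dsimp only
    split_ifs with hp
    · refine Commute.smul_right ?_ _
      unfold wedgeC
      exact Commute.sub_right ((hprec1 (i, j) (k, l) hp).smul_right _)
        ((hprec2 (i, j) (k, l) hp).smul_right _)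
    · exact Commute.zero_right D
  -- commutation with J
  have hJlev : ∀ i : ℕ, Commute D (Jlevel q T (i + 1)) := by
    intro i
    unfold Jlevel sumRoots
    refine Commute.add_right (Commute.one_right D) ?_
    refine Commute.sum_right _ _ _ fun a _ => Commute.sum_right _ _ _ fun b _ =>
      Commute.sum_right _ _ _ fun c _ => Commute.sum_right _ _ _ fun d _ => ?_
    dsimp only
    split_ifs with hp
    · exact (hprec2 (a, b) (c, d) ⟨i, hp⟩).smul_right _
    · exact Commute.zero_right D
  have hJ : Commute D (Jmat q T) := by
    unfold Jmat
    refine comm_listprod D _ fun M hM => ?_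
    simp only [List.mem_map, List.mem_range] at hM
    obtain ⟨i, _, rfl⟩ := hM
    exact hJlev i
  have hu : IsUnit (Jmat q T).det := by
    rw [Jmat_det]
    exact isUnit_one
  have hJinv : Commute D (Jmat q T)⁻¹ := comm_inv D _ hJ hu
  have hJswap : Commute D (swap21 (Jmat q T)) := comm_swap21 x _ hJ
  have hJtot : Commute D (RbarJ q T) := by
    unfold RbarJ
    exact (hJinv.mul_right hRs).mul_right hJswap
  rw [hXd]
  exact ⟨hGGS.eq, hJtot.eq⟩

end
end GGS
end
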